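/- arXiv:1006.2814 — 2 statements merged into one kernel-verified Lean document; each statement's English description precedes it below -/
import Mathlib

section
/- Let Q′ be obtained from a polytope Q by pushing a vertex v to a new position v′ ∈ Q. Then: (1) for every facet F′ of Q′ with vertex set S′, setting S = (S′ ∖ {v′}) ∪ {v} if v′ ∈ F′ and S = S′ otherwise, there is a unique facet φ(F′) of Q with S ⊆ φ(F′); and (2) the map F′ ↦ φ(F′) sends any two adjacent facets of Q′ (facets sharing a ridge) to either the same facet of Q or to two adjacent facets of Q. -/
open scoped Pointwise

variable {V : Type*} [AddCommGroup V] [Module ℝ V]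

/-- A polytope is the convex hull of a finite set of points. -/
def IsPolytope (P : Set V) : Prop :=
  ∃ S : Set V, S.Finite ∧ P = convexHull ℝ S

/-- The dimension of a set: the dimension of its affine span. -/
noncomputable def adim (P : Set V) : ℕ :=
  Module.finrank ℝ (vectorSpan ℝ P)

/-- A face of a polytope: the set of maximizers over it of some linear functional. -/
def IsFaceOf (F P : Set V) : Prop :=
  ∃ l : V →ₗ[ℝ] ℝ, F = {x ∈ P | ∀ y ∈ P, l y ≤ l x}

/-- A vertex: a point whose singleton is a face. -/
def IsVertexOf (x : V) (P : Set V) : Prop := IsFaceOf {x} P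

/-- A facet: a face of dimension `dim P - 1`. -/
def IsFacetOf (F P : Set V) : Prop := IsFaceOf F P ∧ adim F + 1 = adim P

/-- A ridge: a face of dimension `dim P - 2`. -/
def IsRidgeOf (F P : Set V) : Prop := IsFaceOf F P ∧ adim F + 2 = adim P

def vertexSet (P : Set V) : Set V := {x | IsVertexOf x P}

/-- The graph of a polytope: vertices are its vertices, adjacency means being
the two endpoints of an edge (a one-dimensional face, i.e. the segment between
them is a face). -/
def polyGraph (P : Set V) : SimpleGraph V where
  Adj x y := x ≠ y ∧ IsVertexOf x P ∧ IsVertexOf y P ∧ IsFaceOf (segment ℝ x y) P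
  symm := by
    constructor
    rintro x y ⟨hxy, hx, hy, hseg⟩
    exact ⟨hxy.symm, hy, hx, by rwa [segment_symm]⟩
  loopless := by constructor; rintro x ⟨h, -⟩; exact h rfl

/-- Graph distance between two vertices of a polytope. -/
noncomputable def vertexDist (P : Set V) (x y : V) : ℕ := (polyGraph P).dist x y

/-- The combinatorial diameter of a polytope: the diameter of its graph. -/
noncomputable def polyDiam (P : Set V) : ℕ :=
  sSup {n | ∃ x y, IsVertexOf x P ∧ IsVertexOf y P ∧ vertexDist P x y = n}

noncomputable def numFacets (P : Set V) : ℕ := {F | IsFacetOf F P}.ncard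

noncomputable def numVertices (P : Set V) : ℕ := (vertexSet P).ncard

/-- The dual graph of a polytope: nodes are its facets, two facets adjacent iff
their intersection is a ridge. -/
def dualGraph (P : Set V) : SimpleGraph (Set V) where
  Adj F F' := F ≠ F' ∧ IsFacetOf F P ∧ IsFacetOf F' P ∧ IsRidgeOf (F ∩ F') P
  symm := by
    constructor
    rintro F F' ⟨hne, hF, hF', hr⟩
    exact ⟨hne.symm, hF', hF, by rwa [Set.inter_comm]⟩
  loopless := by constructor; rintro F ⟨h, -⟩; exact h rfl

/-- Dual distance between two facets. -/
noncomputable def dualDist (P F F' : Set V) : ℕ := (dualGraph P).dist F F'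

/-- The dual diameter of a polytope. -/
noncomputable def dualDiam (P : Set V) : ℕ :=
  sSup {n | ∃ F F', IsFacetOf F P ∧ IsFacetOf F' P ∧ dualDist P F F' = n}

/-- `Hdiam n d` : the maximum combinatorial diameter of a `d`-dimensional
polytope with `n` facets. -/
noncomputable def Hdiam (n d : ℕ) : ℕ :=
  sSup {δ | ∃ (N : ℕ) (P : Set (Fin N → ℝ)),
    IsPolytope P ∧ adim P = d ∧ numFacets P = n ∧ polyDiam P = δ}

/-- A spindle: a polytope with two distinguished vertices `u`, `v` such that
every facet contains exactly one of them. -/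
structure IsSpindle (P : Set V) (u v : V) : Prop where
  poly : IsPolytope P
  vert_u : IsVertexOf u P
  vert_v : IsVertexOf v P
  facet_cond : ∀ F, IsFacetOf F P → (u ∈ F ↔ v ∉ F)

/-- A prismatoid: a polytope with two designated parallel facets containing all
of its vertices. -/
structure IsPrismatoid (Q Qp Qm : Set V) : Prop where
  poly : IsPolytope Q
  facet_p : IsFacetOf Qp Q
  facet_m : IsFacetOf Qm Q
  parallel : ∃ (l : V →ₗ[ℝ] ℝ) (c₁ c₂ : ℝ), l ≠ 0 ∧ c₁ ≠ c₂ ∧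
    (∀ x ∈ Qp, l x = c₁) ∧ (∀ x ∈ Qm, l x = c₂)
  verts : vertexSet Q ⊆ Qp ∪ Qm

/-- A polytope is simplicial if every facet has exactly `dim P` vertices. -/
def IsSimplicial (P : Set V) : Prop :=
  ∀ F, IsFacetOf F P → (vertexSet F).ncard = adim P

/-- A polytope is simple if every vertex lies in exactly `dim P` facets. -/
def IsSimple (P : Set V) : Prop :=
  ∀ x, IsVertexOf x P → {F | IsFacetOf F P ∧ x ∈ F}.ncard = adim P

open scoped Classical

/-- `Q'` is obtained from `Q` by pushing the vertex `v` to position `v' ∈ Q`: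
the vertex set of `Q'` is `(V ∖ {v}) ∪ {v'}` and the only hyperplanes spanned
by vertices of `Q` meeting the segment `[v,v']` are those containing `v`. -/
def ObtainedByPushing {V : Type*} [AddCommGroup V] [Module ℝ V]
    (Q Q' : Set V) (v v' : V) : Prop :=
  IsPolytope Q ∧ IsVertexOf v Q ∧ v' ∈ Q ∧
  Q' = convexHull ℝ ((vertexSet Q \ {v}) ∪ {v'}) ∧
  vertexSet Q' = (vertexSet Q \ {v}) ∪ {v'} ∧
  ∀ S : Set V, S ⊆ vertexSet Q → adim S + 1 = adim Q →
    (∃ x ∈ segment ℝ v v', x ∈ affineSpan ℝ S) → v ∈ affineSpan ℝ S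

/-- Given a facet `F'` of `Q'` with vertex set `S'`, the set
`S = (S' ∖ {v'}) ∪ {v}` if `v' ∈ F'`, and `S = S'` otherwise. -/
noncomputable def pushVerts {V : Type*} [AddCommGroup V] [Module ℝ V]
    (F' : Set V) (v v' : V) : Set V :=
  if v' ∈ F' then (vertexSet F' \ {v'}) ∪ {v} else vertexSet F'


/-! ### Toolkit -/

section Toolkit

open Set

variable {V : Type*} [AddCommGroup V] [Module ℝ V]

/-- The level set of a linear functional, as an affine subspace. -/
def lvl (l : V →ₗ[ℝ] ℝ) (c : ℝ) : AffineSubspace ℝ V where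
  carrier := {x | l x = c}
  smul_vsub_vadd_mem' := by
    intro t p₁ p₂ p₃ h₁ h₂ h₃
    simp only [Set.mem_setOf_eq] at *
    simp only [vsub_eq_sub, vadd_eq_add, map_add, map_smul, map_sub, h₁, h₂, h₃,
      smul_eq_mul]
    ring

lemma mem_lvl {l : V →ₗ[ℝ] ℝ} {c : ℝ} {x : V} : x ∈ lvl l c ↔ l x = c := Iff.rfl

lemma le_on_hull {S : Set V} {l : V →ₗ[ℝ] ℝ} {m : ℝ} (h : ∀ s ∈ S, l s ≤ m) :
    ∀ y ∈ convexHull ℝ S, l y ≤ m := fun _ hy =>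
  convexHull_min h (convex_halfSpace_le l.isLinear m) hy

lemma eq_on_hull {S : Set V} {l : V →ₗ[ℝ] ℝ} {m : ℝ} (h : ∀ s ∈ S, l s = m) :
    ∀ y ∈ convexHull ℝ S, l y = m := by
  intro y hy
  have h₁ := le_on_hull (l := l) (m := m) (fun s hs => (h s hs).le) y hy
  have h₂ := le_on_hull (l := -l) (m := -m) (fun s hs => by simp [h s hs]) y hy
  simp only [LinearMap.neg_apply, neg_le_neg_iff] at h₂
  exact le_antisymm h₁ h₂

lemma argmax_eq_level {S : Set V} {l : V →ₗ[ℝ] ℝ} {m : ℝ}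
    (hub : ∀ s ∈ S, l s ≤ m) (hex : ∃ s ∈ S, l s = m) :
    {x ∈ convexHull ℝ S | ∀ y ∈ convexHull ℝ S, l y ≤ l x}
      = {x ∈ convexHull ℝ S | l x = m} := by
  obtain ⟨s₀, hs₀S, hs₀m⟩ := hex
  ext x
  simp only [Set.mem_setOf_eq]
  constructor
  · rintro ⟨hx, hmax⟩
    refine ⟨hx, le_antisymm (le_on_hull hub x hx) ?_⟩
    rw [← hs₀m]
    exact hmax s₀ (subset_convexHull ℝ S hs₀S)
  · rintro ⟨hx, hxm⟩
    exact ⟨hx, fun y hy => by rw [hxm]; exact le_on_hull hub y hy⟩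

lemma level_hull_eq {S : Set V} {l : V →ₗ[ℝ] ℝ} {m : ℝ}
    (hub : ∀ s ∈ S, l s ≤ m) :
    {x ∈ convexHull ℝ S | l x = m} = convexHull ℝ {s ∈ S | l s = m} := by
  apply Set.Subset.antisymm
  · rintro x ⟨hx, hxm⟩
    rw [convexHull_eq] at hx
    obtain ⟨ι, t, w, z, hw₀, hw₁, hz, rfl⟩ := hx
    have hcm : l (t.centerMass w z) = ∑ i ∈ t, w i * l (z i) := by
      rw [Finset.centerMass_eq_of_sum_1 _ _ hw₁, map_sum]
      simp [smul_eq_mul]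
    have hsum0 : ∑ i ∈ t, w i * (m - l (z i)) = 0 := by
      have : ∑ i ∈ t, w i * (m - l (z i))
          = (∑ i ∈ t, w i) * m - ∑ i ∈ t, w i * l (z i) := by
        rw [Finset.sum_mul, ← Finset.sum_sub_distrib]
        congr 1; ext i; ring
      rw [this, hw₁, one_mul, ← hcm, hxm, sub_self]
    have hkey : ∀ i ∈ t, w i ≠ 0 → l (z i) = m := by
      intro i hi hwi
      have hnn : ∀ i ∈ t, 0 ≤ w i * (m - l (z i)) := fun j hj =>
        mul_nonneg (hw₀ j hj) (sub_nonneg.2 (hub _ (hz j hj)))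
      have := (Finset.sum_eq_zero_iff_of_nonneg hnn).1 hsum0 i hi
      rcases mul_eq_zero.1 this with h | h
      · exact absurd h hwi
      · linarith [sub_eq_zero.1 h]
    rw [← Finset.centerMass_filter_ne_zero (t := t) (w := w) z]
    apply Finset.centerMass_mem_convexHull
    · intro i hi; exact hw₀ i (Finset.mem_filter.1 hi).1
    · rw [Finset.sum_filter_ne_zero, hw₁]; exact one_pos
    · intro i hi
      obtain ⟨hit, hwi⟩ := Finset.mem_filter.1 hi
      exact ⟨hz i hit, hkey i hit hwi⟩
  · intro x hx
    refine ⟨convexHull_mono (fun s hs => hs.1) hx, ?_⟩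
    exact eq_on_hull (fun s hs => hs.2) x hx

lemma isFaceOf_subset {F P : Set V} (hF : IsFaceOf F P) : F ⊆ P := by
  obtain ⟨l, rfl⟩ := hF; exact fun x hx => hx.1

lemma vertexOf_mem {x : V} {P : Set V} (hx : IsVertexOf x P) : x ∈ P := by
  obtain ⟨l, hl⟩ := hx
  have : x ∈ ({x} : Set V) := rfl
  rw [hl] at this; exact this.1

/-- Package of data for a face of a polytope `convexHull ℝ S`. -/
lemma face_package {S : Set V} (hS : S.Finite) (hne : S.Nonempty) {F : Set V}
    (hF : IsFaceOf F (convexHull ℝ S)) :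
    ∃ (l : V →ₗ[ℝ] ℝ) (m : ℝ), (∀ s ∈ S, l s ≤ m) ∧ (∃ s ∈ S, l s = m) ∧
      F = convexHull ℝ {s ∈ S | l s = m} ∧ F = {x ∈ convexHull ℝ S | l x = m} := by
  obtain ⟨l, hl⟩ := hF
  obtain ⟨s₀, hs₀S, hs₀max⟩ := Set.exists_max_image S l hS hne
  refine ⟨l, l s₀, hs₀max, ⟨s₀, hs₀S, rfl⟩, ?_, ?_⟩
  · rw [hl, argmax_eq_level hs₀max ⟨s₀, hs₀S, rfl⟩, level_hull_eq hs₀max]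
  · rw [hl, argmax_eq_level hs₀max ⟨s₀, hs₀S, rfl⟩]

lemma face_nonempty {S : Set V} (hS : S.Finite) (hne : S.Nonempty) {F : Set V}
    (hF : IsFaceOf F (convexHull ℝ S)) : F.Nonempty := by
  obtain ⟨l, m, hub, ⟨s, hsS, hsm⟩, hF1, -⟩ := face_package hS hne hF
  exact ⟨s, hF1 ▸ subset_convexHull ℝ _ ⟨hsS, hsm⟩⟩

lemma vertexSet_hull_subset {S : Set V} (hS : S.Finite) :
    vertexSet (convexHull ℝ S) ⊆ S := by
  intro x hx
  rcases S.eq_empty_or_nonempty with rfl | hne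
  · exfalso
    obtain ⟨l, hl⟩ := hx
    have : x ∈ ({x} : Set V) := rfl
    rw [hl] at this
    simpa using this.1
  · obtain ⟨l, m, hub, ⟨s, hsS, hsm⟩, hF1, -⟩ := face_package hS hne hx
    have : s ∈ ({x} : Set V) := hF1 ▸ subset_convexHull ℝ _ ⟨hsS, hsm⟩
    rw [Set.mem_singleton_iff] at this
    rw [← this]; exact hsS

lemma vertexOf_face {F P : Set V} (hF : IsFaceOf F P) {x : V}
    (hx : IsVertexOf x P) (hxF : x ∈ F) : IsVertexOf x F := by
  obtain ⟨l₀, hl₀⟩ := hx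
  have hxmax : ∀ u ∈ P, l₀ u ≤ l₀ x := by
    have : x ∈ ({x} : Set V) := rfl
    rw [hl₀] at this; exact this.2
  refine ⟨l₀, ?_⟩
  apply Set.Subset.antisymm
  · intro y hy
    rw [Set.mem_singleton_iff] at hy; subst hy
    exact ⟨hxF, fun z hz => hxmax z (isFaceOf_subset hF hz)⟩
  · rintro y ⟨hyF, hymax⟩
    have hyx : l₀ x ≤ l₀ y := hymax x hxF
    have : y ∈ ({x} : Set V) := by
      rw [hl₀]
      exact ⟨isFaceOf_subset hF hyF, fun u hu => le_trans (hxmax u hu) hyx⟩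
    exact this

lemma isFaceOf_inter {F₁ F₂ P : Set V} (h₁ : IsFaceOf F₁ P) (h₂ : IsFaceOf F₂ P)
    (hne : (F₁ ∩ F₂).Nonempty) : IsFaceOf (F₁ ∩ F₂) P := by
  obtain ⟨l₁, hl₁⟩ := h₁
  obtain ⟨l₂, hl₂⟩ := h₂
  obtain ⟨x₀, hx₀₁, hx₀₂⟩ := hne
  have hx₀P : x₀ ∈ P := by rw [hl₁] at hx₀₁; exact hx₀₁.1
  have hmax₁ : ∀ y ∈ P, l₁ y ≤ l₁ x₀ := by rw [hl₁] at hx₀₁; exact hx₀₁.2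
  have hmax₂ : ∀ y ∈ P, l₂ y ≤ l₂ x₀ := by rw [hl₂] at hx₀₂; exact hx₀₂.2
  refine ⟨l₁ + l₂, ?_⟩
  ext x
  simp only [Set.mem_inter_iff, LinearMap.add_apply, Set.mem_setOf_eq]
  constructor
  · rintro ⟨hxF₁, hxF₂⟩
    have hxP : x ∈ P := by rw [hl₁] at hxF₁; exact hxF₁.1
    have m₁ : ∀ y ∈ P, l₁ y ≤ l₁ x := by rw [hl₁] at hxF₁; exact hxF₁.2
    have m₂ : ∀ y ∈ P, l₂ y ≤ l₂ x := by rw [hl₂] at hxF₂; exact hxF₂.2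
    exact ⟨hxP, fun y hy => add_le_add (m₁ y hy) (m₂ y hy)⟩
  · rintro ⟨hxP, hmax⟩
    have h₁x : l₁ x ≤ l₁ x₀ := hmax₁ x hxP
    have h₂x : l₂ x ≤ l₂ x₀ := hmax₂ x hxP
    have hsum : l₁ x₀ + l₂ x₀ ≤ l₁ x + l₂ x := hmax x₀ hx₀P
    have e₁ : l₁ x = l₁ x₀ := by linarith
    have e₂ : l₂ x = l₂ x₀ := by linarith
    constructor
    · rw [hl₁]; exact ⟨hxP, fun y hy => e₁ ▸ hmax₁ y hy⟩
    · rw [hl₂]; exact ⟨hxP, fun y hy => e₂ ▸ hmax₂ y hy⟩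

end Toolkit


/-! ### Dimension toolkit -/

section DimToolkit

open Set Module

variable {V : Type*} [AddCommGroup V] [Module ℝ V]

lemma adim_eq_finrank_direction (S : Set V) :
    adim S = Module.finrank ℝ (affineSpan ℝ S).direction := by
  rw [adim, direction_affineSpan]

lemma adim_hull (S : Set V) : adim (convexHull ℝ S) = adim S := by
  rw [adim_eq_finrank_direction, adim_eq_finrank_direction, affineSpan_convexHull]

lemma finrank_le_of_le {p q : Submodule ℝ V} [FiniteDimensional ℝ q] (h : p ≤ q) :
    Module.finrank ℝ p ≤ Module.finrank ℝ q := by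
  rcases eq_or_lt_of_le h with rfl | h
  · exact le_refl _
  · exact (Submodule.finrank_lt_finrank_of_lt h).le

lemma vectorSpan_le_direction {S : Set V} {A : AffineSubspace ℝ V}
    (h : S ⊆ (A : Set V)) : vectorSpan ℝ S ≤ A.direction := by
  rw [vectorSpan_def]
  rw [Submodule.span_le]
  rintro x ⟨a, ha, b, hb, rfl⟩
  exact AffineSubspace.vsub_mem_direction (h ha) (h hb)

lemma adim_le_of_subset_affine {S : Set V} {A : AffineSubspace ℝ V}
    [FiniteDimensional ℝ A.direction] (h : S ⊆ (A : Set V)) :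
    adim S ≤ Module.finrank ℝ A.direction :=
  finrank_le_of_le (vectorSpan_le_direction h)

lemma adim_mono {S T : Set V} (hT : T.Finite) (h : S ⊆ T) : adim S ≤ adim T := by
  have : FiniteDimensional ℝ (vectorSpan ℝ T) := finiteDimensional_vectorSpan_of_finite ℝ hT
  exact finrank_le_of_le (vectorSpan_mono ℝ h)

/-- Two affine subspaces with `M ≤ N`, `M` nonempty and `dim N ≤ dim M` are equal. -/
lemma affine_eq_of_le_of_dim_le {M N : AffineSubspace ℝ V} (h : M ≤ N)
    (hne : (M : Set V).Nonempty) [FiniteDimensional ℝ N.direction]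
    (hd : Module.finrank ℝ N.direction ≤ Module.finrank ℝ M.direction) : M = N := by
  have hdir : M.direction = N.direction :=
    Submodule.eq_of_le_of_finrank_le (AffineSubspace.direction_le h) hd
  obtain ⟨x, hx⟩ := hne
  exact AffineSubspace.ext_of_direction_eq hdir ⟨x, hx, h hx⟩

lemma affine_dim_lt {M N : AffineSubspace ℝ V} (h : M ≤ N)
    (hne : (M : Set V).Nonempty) [FiniteDimensional ℝ N.direction]
    (hne' : M ≠ N) : Module.finrank ℝ M.direction < Module.finrank ℝ N.direction := by
  have hdir : M.direction ≤ N.direction := AffineSubspace.direction_le h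
  rcases eq_or_lt_of_le hdir with heq | hlt
  · exfalso
    obtain ⟨x, hx⟩ := hne
    exact hne' (AffineSubspace.ext_of_direction_eq heq ⟨x, hx, h hx⟩)
  · exact Submodule.finrank_lt_finrank_of_lt hlt

lemma adim_insert_le {S : Set V} (hS : S.Finite) (p : V) :
    adim (insert p S) ≤ adim S + 1 := by
  rcases S.eq_empty_or_nonempty with rfl | ⟨q, hq⟩
  · have : insert p (∅ : Set V) = {p} := by simp
    rw [this, adim, vectorSpan_singleton]
    simp
  · have hfin : FiniteDimensional ℝ (vectorSpan ℝ S) :=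
      finiteDimensional_vectorSpan_of_finite ℝ hS
    have hq' : q ∈ affineSpan ℝ S := mem_affineSpan ℝ hq
    have hdir := AffineSubspace.direction_affineSpan_insert (p₂ := p) hq'
    rw [affineSpan_insert_affineSpan] at hdir
    rw [adim_eq_finrank_direction, hdir]
    have h1 : FiniteDimensional ℝ (Submodule.span ℝ ({p -ᵥ q} : Set V)) :=
      FiniteDimensional.span_of_finite ℝ (Set.finite_singleton _)
    have h2 : FiniteDimensional ℝ ((affineSpan ℝ S).direction) := by
      rw [direction_affineSpan]; exact hfin
    calc Module.finrank ℝ ↥(Submodule.span ℝ {p -ᵥ q} ⊔ (affineSpan ℝ S).direction)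
        ≤ Module.finrank ℝ (Submodule.span ℝ ({p -ᵥ q} : Set V))
          + Module.finrank ℝ ((affineSpan ℝ S).direction) := by
          have := Submodule.finrank_sup_add_finrank_inf_eq
            (Submodule.span ℝ ({p -ᵥ q} : Set V)) ((affineSpan ℝ S).direction)
          omega
      _ ≤ 1 + Module.finrank ℝ ((affineSpan ℝ S).direction) := by
          have h3 : Module.finrank ℝ (Submodule.span ℝ ({p -ᵥ q} : Set V)) ≤ 1 := by
            have := finrank_span_le_card (R := ℝ) (M := V) ({p -ᵥ q} : Set V)
            simpa using this
          omega
      _ = adim S + 1 := by rw [adim_eq_finrank_direction]; omega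

lemma adim_insert_of_not_mem {S : Set V} (hS : S.Finite) (hne : S.Nonempty) {p : V}
    (hp : p ∉ affineSpan ℝ S) : adim (insert p S) = adim S + 1 := by
  obtain ⟨q, hq⟩ := hne
  have hfin : FiniteDimensional ℝ (vectorSpan ℝ S) :=
    finiteDimensional_vectorSpan_of_finite ℝ hS
  have hq' : q ∈ affineSpan ℝ S := mem_affineSpan ℝ hq
  have hdir := AffineSubspace.direction_affineSpan_insert (p₂ := p) hq'
  rw [affineSpan_insert_affineSpan] at hdir
  have h2 : FiniteDimensional ℝ ((affineSpan ℝ S).direction) := by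
    rw [direction_affineSpan]; exact hfin
  have hpq : p -ᵥ q ∉ (affineSpan ℝ S).direction := by
    intro hmem
    exact hp ((AffineSubspace.vsub_right_mem_direction_iff_mem hq' p).1 hmem)
  have hpq0 : (p -ᵥ q : V) ≠ 0 := by
    intro h0
    apply hpq
    rw [h0]; exact Submodule.zero_mem _
  have hinf : Submodule.span ℝ ({p -ᵥ q} : Set V) ⊓ (affineSpan ℝ S).direction = ⊥ := by
    rw [Submodule.eq_bot_iff]
    rintro x ⟨hx1, hx2⟩
    rw [SetLike.mem_coe, Submodule.mem_span_singleton] at hx1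
    obtain ⟨c, rfl⟩ := hx1
    by_contra hc0
    have hc : c ≠ 0 := by
      intro h; rw [h, zero_smul] at hc0; exact hc0 rfl
    have : (p -ᵥ q : V) ∈ (affineSpan ℝ S).direction := by
      have := Submodule.smul_mem _ c⁻¹ hx2
      rwa [inv_smul_smul₀ hc] at this
    exact hpq this
  have hsum := Submodule.finrank_sup_add_finrank_inf_eq
    (Submodule.span ℝ ({p -ᵥ q} : Set V)) ((affineSpan ℝ S).direction)
  rw [hinf] at hsum
  rw [adim_eq_finrank_direction, hdir, adim_eq_finrank_direction]
  rw [finrank_span_singleton hpq0] at hsum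
  simp only [finrank_bot] at hsum
  omega

lemma adim_diff_singleton {S : Set V} (hS : S.Finite) (p : V) :
    adim S ≤ adim (S \ {p}) + 1 := by
  have h1 : S ⊆ insert p (S \ {p}) := by
    intro x hx
    by_cases hxp : x = p
    · exact hxp ▸ Set.mem_insert _ _
    · exact Set.mem_insert_of_mem _ ⟨hx, hxp⟩
  calc adim S ≤ adim (insert p (S \ {p})) :=
        adim_mono ((hS.diff (t := {p})).insert p) h1
    _ ≤ adim (S \ {p}) + 1 := adim_insert_le (hS.diff (t := {p})) p

lemma affineSpan_le_lvl {F : Set V} {l : V →ₗ[ℝ] ℝ} {c : ℝ}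
    (h : ∀ x ∈ F, l x = c) : affineSpan ℝ F ≤ lvl l c := by
  rw [affineSpan_le]
  exact h

/-- A nonempty face equals the intersection of the polytope with the affine span
of the face. -/
lemma face_eq_inter_affineSpan {P F : Set V} (hF : IsFaceOf F P) {x₀ : V}
    (hx₀ : x₀ ∈ F) : F = P ∩ (affineSpan ℝ F : Set V) := by
  obtain ⟨l, hl⟩ := hF
  have hx₀' := hx₀
  rw [hl] at hx₀'
  obtain ⟨hx₀P, hx₀max⟩ := hx₀'
  have hconst : ∀ x ∈ F, l x = l x₀ := by
    intro x hx
    rw [hl] at hx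
    exact le_antisymm (hx₀max x hx.1) (hx.2 x₀ hx₀P)
  apply Set.Subset.antisymm
  · intro x hx
    exact ⟨(hl ▸ hx).1, subset_affineSpan ℝ F hx⟩
  · rintro x ⟨hxP, hxspan⟩
    have hxc : l x = l x₀ := affineSpan_le_lvl hconst hxspan
    rw [hl]
    exact ⟨hxP, fun y hy => hxc ▸ hx₀max y hy⟩

lemma convex_adim_zero {G : Set V} [FiniteDimensional ℝ (vectorSpan ℝ G)]
    (h0 : adim G = 0) {x y : V} (hx : x ∈ G) (hy : y ∈ G) : x = y := by
  have : vectorSpan ℝ G = ⊥ := Submodule.finrank_eq_zero.1 h0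
  have hxy : x -ᵥ y ∈ vectorSpan ℝ G := vsub_mem_vectorSpan ℝ hx hy
  rw [this, Submodule.mem_bot] at hxy
  rwa [vsub_eq_sub, sub_eq_zero] at hxy

end DimToolkit


/-! ### Separation toolkit -/

section SepToolkit

open Set Module

variable {V : Type*} [AddCommGroup V] [Module ℝ V]

/-- A linear functional vanishing on a submodule and equal to `1` at a given
point outside of it. -/
lemma exists_functional_vanishing {M : Submodule ℝ V} {x : V} (hx : x ∉ M) :
    ∃ f : V →ₗ[ℝ] ℝ, (∀ m ∈ M, f m = 0) ∧ f x = 1 := by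
  have hx0 : (Submodule.Quotient.mk x : V ⧸ M) ≠ 0 := by
    simpa [Submodule.Quotient.mk_eq_zero] using hx
  have : ¬ (∀ φ : Module.Dual ℝ (V ⧸ M), φ (Submodule.Quotient.mk x) = 0) := by
    rw [Module.forall_dual_apply_eq_zero_iff]
    exact hx0
  push_neg at this
  obtain ⟨φ, hφ⟩ := this
  refine ⟨(φ (Submodule.Quotient.mk x))⁻¹ • (φ.comp M.mkQ), ?_, ?_⟩
  · intro m hm
    have : M.mkQ m = 0 := by
      rw [Submodule.mkQ_apply, Submodule.Quotient.mk_eq_zero]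
      exact hm
    simp [this]
  · simp only [LinearMap.smul_apply, LinearMap.coe_comp, Function.comp_apply,
      Submodule.mkQ_apply, smul_eq_mul]
    exact inv_mul_cancel₀ hφ

/-- Strict separation of a point from the convex hull of a finite set, in a bare
real vector space. -/
lemma sep_point_hull {R : Set V} (hR : R.Finite) {x : V} (hx : x ∉ convexHull ℝ R) :
    ∃ l : V →ₗ[ℝ] ℝ, ∀ y ∈ convexHull ℝ R, l y < l x := by
  rcases R.eq_empty_or_nonempty with rfl | hne
  · exact ⟨0, by simp⟩
  set M : Submodule ℝ V := Submodule.span ℝ (insert x R) with hM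
  have hfinM : FiniteDimensional ℝ M :=
    FiniteDimensional.span_of_finite ℝ (hR.insert x)
  have hRM : R ⊆ (M : Set V) := fun r hr =>
    Submodule.subset_span (Set.mem_insert_of_mem _ hr)
  have hxM : x ∈ M := Submodule.subset_span (Set.mem_insert _ _)
  set RM : Set M := {y : M | (y : V) ∈ R} with hRMdef
  set xM : M := ⟨x, hxM⟩ with hxMdef
  have hhullRM : convexHull ℝ RM ⊆ (M.subtype) ⁻¹' (convexHull ℝ R) := by
    apply convexHull_min
    · intro y hy
      exact subset_convexHull ℝ R hy
    · exact (convex_convexHull ℝ R).linear_preimage M.subtype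
  have hxRM : xM ∉ convexHull ℝ RM := fun hmem => hx (hhullRM hmem)
  -- transfer to coordinates
  set n := Module.finrank ℝ M with hn
  set e := (Module.finBasis ℝ M).equivFun with he
  set R₂ : Set (Fin n → ℝ) := e '' RM with hR₂
  have hR₂fin : R₂.Finite := by
    apply Set.Finite.image
    have : RM = (fun y : M => (y : V)) ⁻¹' R := rfl
    exact Set.Finite.preimage (Subtype.coe_injective.injOn) hR
  have hhullR₂ : convexHull ℝ R₂ ⊆ (e.symm : (Fin n → ℝ) →ₗ[ℝ] M) ⁻¹' (convexHull ℝ RM) := by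
    apply convexHull_min
    · rintro y ⟨z, hz, rfl⟩
      simp only [Set.mem_preimage, LinearEquiv.coe_coe, LinearEquiv.symm_apply_apply]
      exact subset_convexHull ℝ RM hz
    · exact (convex_convexHull ℝ RM).linear_preimage _
  have hx₂ : (e xM) ∉ convexHull ℝ R₂ := by
    intro hmem
    have := hhullR₂ hmem
    simp only [Set.mem_preimage, LinearEquiv.coe_coe, LinearEquiv.symm_apply_apply] at this
    exact hxRM this
  obtain ⟨f, u, hfa, hfx⟩ :=
    geometric_hahn_banach_closed_point (convex_convexHull ℝ R₂)
      (hR₂fin.isClosed_convexHull (𝕜 := ℝ)) hx₂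
  -- build the functional on V
  obtain ⟨q, hq⟩ := Submodule.exists_isCompl M
  set proj : V →ₗ[ℝ] M := M.linearProjOfIsCompl q hq with hproj
  set lM : M →ₗ[ℝ] ℝ := (f.toLinearMap).comp (e : M →ₗ[ℝ] (Fin n → ℝ)) with hlM
  refine ⟨lM.comp proj, ?_⟩
  intro y hy
  have hyM : y ∈ M := by
    have : convexHull ℝ R ⊆ (M : Set V) :=
      convexHull_min hRM M.convex
    exact this hy
  have hprojy : proj y = ⟨y, hyM⟩ :=
    Submodule.linearProjOfIsCompl_apply_left hq ⟨y, hyM⟩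
  have hprojx : proj x = xM :=
    Submodule.linearProjOfIsCompl_apply_left hq xM
  have hyRM : (⟨y, hyM⟩ : M) ∈ convexHull ℝ RM := by
    -- y ∈ hull R with R = image of RM; pull back through the inclusion
    -- use that hull RM = preimage ∩ ... direct: show hull R ⊆ subtype '' hull RM
    have himg : convexHull ℝ R ⊆ M.subtype '' (convexHull ℝ RM) := by
      apply convexHull_min
      · intro r hr
        exact ⟨⟨r, hRM hr⟩, subset_convexHull ℝ RM hr, rfl⟩
      · rintro a ⟨a', ha', rfl⟩ b ⟨b', hb', rfl⟩ ta tb hta htb htab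
        exact ⟨ta • a' + tb • b',
          (convex_convexHull ℝ RM) ha' hb' hta htb htab, by simp⟩
    obtain ⟨y', hy', hyy'⟩ := himg hy
    have : y' = ⟨y, hyM⟩ := Subtype.ext hyy'
    rwa [← this]
  have hy₂ : e ⟨y, hyM⟩ ∈ convexHull ℝ R₂ := by
    have himg2 : e '' (convexHull ℝ RM) ⊆ convexHull ℝ R₂ := by
      rintro a ⟨a', ha', rfl⟩
      revert a' ha'
      intro a' ha'
      have : convexHull ℝ RM ⊆ e ⁻¹' (convexHull ℝ R₂) := by
        apply convexHull_min
        · intro z hz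
          exact subset_convexHull ℝ R₂ ⟨z, hz, rfl⟩
        · exact (convex_convexHull ℝ R₂).linear_preimage (e : M →ₗ[ℝ] (Fin n → ℝ))
      exact this ha'
    exact himg2 ⟨⟨y, hyM⟩, hyRM, rfl⟩
  simp only [LinearMap.coe_comp, Function.comp_apply, hprojy, hprojx, hlM]
  calc f (e ⟨y, hyM⟩) < u := hfa _ hy₂
    _ < f (e xM) := hfx

/-- A generator which is not a vertex is in the hull of the other generators. -/
lemma mem_hull_diff_of_not_vertex {S : Set V} (hS : S.Finite) {s : V} (hs : s ∈ S)
    (hnv : ¬ IsVertexOf s (convexHull ℝ S)) : s ∈ convexHull ℝ (S \ {s}) := by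
  by_contra hmem
  obtain ⟨l, hl⟩ := sep_point_hull (hS.diff (t := {s})) hmem
  apply hnv
  refine ⟨l, ?_⟩
  have hub : ∀ t ∈ S, l t ≤ l s := by
    intro t ht
    by_cases hts : t = s
    · exact hts ▸ le_refl _
    · exact (hl t (subset_convexHull ℝ _ ⟨ht, hts⟩)).le
  have heq : {t ∈ S | l t = l s} = {s} := by
    apply Set.Subset.antisymm
    · rintro t ⟨htS, htl⟩
      by_contra hts
      have := hl t (subset_convexHull ℝ _ ⟨htS, hts⟩)
      rw [htl] at this
      exact lt_irrefl _ this
    · rintro t rfl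
      exact ⟨hs, rfl⟩
  rw [argmax_eq_level hub ⟨s, hs, rfl⟩, level_hull_eq hub, heq, convexHull_singleton]

/-- Minkowski: a polytope is the hull of its vertex set (Finset version). -/
lemma hull_eq_hull_vertexSet_finset (F : Finset V) :
    convexHull ℝ (F : Set V) = convexHull ℝ (vertexSet (convexHull ℝ (F : Set V))) := by
  induction F using Finset.strongInductionOn with
  | _ F ih =>
    by_cases hsub : (F : Set V) ⊆ vertexSet (convexHull ℝ (F : Set V))
    · apply Set.Subset.antisymm
      · exact convexHull_mono hsub
      · exact convexHull_mono (vertexSet_hull_subset F.finite_toSet)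
    · rw [Set.not_subset] at hsub
      obtain ⟨s, hsF, hsnv⟩ := hsub
      have hsmem : s ∈ convexHull ℝ ((F : Set V) \ {s}) :=
        mem_hull_diff_of_not_vertex F.finite_toSet hsF hsnv
      have herase : ((F.erase s : Finset V) : Set V) = (F : Set V) \ {s} := by
        simp [Finset.coe_erase]
      have hhull : convexHull ℝ (F : Set V) = convexHull ℝ ((F.erase s : Finset V) : Set V) := by
        rw [herase]
        apply Set.Subset.antisymm
        · apply convexHull_min
          · intro t ht
            by_cases hts : t = s
            · exact hts ▸ hsmem
            · exact subset_convexHull ℝ _ ⟨ht, hts⟩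
          · exact convex_convexHull ℝ _
        · exact convexHull_mono Set.diff_subset
      calc convexHull ℝ (F : Set V) = convexHull ℝ ((F.erase s : Finset V) : Set V) := hhull
        _ = convexHull ℝ (vertexSet (convexHull ℝ ((F.erase s : Finset V) : Set V))) :=
            ih (F.erase s) (Finset.erase_ssubset hsF)
        _ = convexHull ℝ (vertexSet (convexHull ℝ (F : Set V))) := by rw [← hhull]

/-- Minkowski: a polytope is the hull of its vertex set. -/
lemma polytope_hull_vertexSet {P : Set V} (hP : IsPolytope P) :
    P = convexHull ℝ (vertexSet P) := by
  obtain ⟨S, hS, rfl⟩ := hP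
  have h2 := hull_eq_hull_vertexSet_finset hS.toFinset
  rw [hS.coe_toFinset] at h2
  exact h2

lemma vertexSet_finite {P : Set V} (hP : IsPolytope P) : (vertexSet P).Finite := by
  obtain ⟨S, hS, rfl⟩ := hP
  exact hS.subset (vertexSet_hull_subset hS)

end SepToolkit


/-! ### Pushing setup -/

section PushSetup

open Set Module

variable {V : Type*} [AddCommGroup V] [Module ℝ V] {Q Q' : Set V} {v v' : V}

lemma vertexSet_subset (P : Set V) : vertexSet P ⊆ P := fun _ hx => vertexOf_mem hx

lemma push_Qhull (h : ObtainedByPushing Q Q' v v') :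
    Q = convexHull ℝ (vertexSet Q) := polytope_hull_vertexSet h.1

lemma push_Wfin (h : ObtainedByPushing Q Q' v v') : (vertexSet Q).Finite :=
  vertexSet_finite h.1

lemma push_Tfin (h : ObtainedByPushing Q Q' v v') :
    ((vertexSet Q \ {v}) ∪ {v'}).Finite :=
  ((push_Wfin h).diff (t := {v})).union (Set.finite_singleton v')

lemma push_TsubQ (h : ObtainedByPushing Q Q' v v') :
    (vertexSet Q \ {v}) ∪ {v'} ⊆ Q := by
  apply Set.union_subset
  · exact fun x hx => vertexOf_mem hx.1
  · intro x hx
    rw [Set.mem_singleton_iff] at hx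
    exact hx ▸ h.2.2.1

lemma push_Q'subQ (h : ObtainedByPushing Q Q' v v') : Q' ⊆ Q := by
  rw [h.2.2.2.1]
  have hconv : Convex ℝ Q := by
    rw [push_Qhull h]; exact convex_convexHull ℝ _
  exact convexHull_min (push_TsubQ h) hconv

lemma push_QsubA (h : ObtainedByPushing Q Q' v v') :
    Q ⊆ (affineSpan ℝ (vertexSet Q) : Set V) := by
  nth_rewrite 1 [push_Qhull h]
  exact convexHull_subset_affineSpan _

lemma push_fdA (h : ObtainedByPushing Q Q' v v') :
    FiniteDimensional ℝ (affineSpan ℝ (vertexSet Q)).direction := by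
  rw [direction_affineSpan]
  exact finiteDimensional_vectorSpan_of_finite ℝ (push_Wfin h)

lemma push_finrankA (h : ObtainedByPushing Q Q' v v') :
    Module.finrank ℝ (affineSpan ℝ (vertexSet Q)).direction = adim Q := by
  rw [direction_affineSpan]
  conv_rhs => rw [push_Qhull h]
  rw [adim_hull]
  rfl

lemma push_vW (h : ObtainedByPushing Q Q' v v') : v ∈ vertexSet Q := h.2.1

lemma push_adim_le (h : ObtainedByPushing Q Q' v v') {S : Set V}
    (hS : S ⊆ Q) : adim S ≤ adim Q := by
  haveI := push_fdA h
  have := adim_le_of_subset_affine (hS.trans (push_QsubA h))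
  rwa [push_finrankA h] at this

lemma push_fd_vectorSpan (h : ObtainedByPushing Q Q' v v') {S : Set V}
    (hS : S ⊆ Q) : FiniteDimensional ℝ (vectorSpan ℝ S) := by
  haveI := push_fdA h
  exact Submodule.finiteDimensional_of_le
    (vectorSpan_le_direction (hS.trans (push_QsubA h)))

lemma push_adimQ' (h : ObtainedByPushing Q Q' v v') : adim Q' = adim Q := by
  have hQ'def := h.2.2.2.1
  have hhyp := h.2.2.2.2.2
  set W := vertexSet Q with hW
  have hWfin : W.Finite := push_Wfin h
  have hvW : v ∈ W := push_vW h
  have hadimT : adim Q' = adim ((W \ {v}) ∪ {v'}) := by rw [hQ'def, adim_hull]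
  have hWQ : adim W = adim Q := by
    conv_rhs => rw [push_Qhull h]
    rw [adim_hull]
  apply le_antisymm
  · rw [hadimT]
    exact push_adim_le h (push_TsubQ h)
  · have h1 : adim W ≤ adim (W \ {v}) + 1 := adim_diff_singleton hWfin v
    rcases (by omega : adim W ≤ adim (W \ {v}) ∨ adim (W \ {v}) + 1 = adim W) with hc | hc
    · rw [hadimT, ← hWQ]
      exact hc.trans (adim_mono (push_Tfin h) Set.subset_union_left)
    · by_cases hv'S : v' ∈ affineSpan ℝ (W \ {v})
      · exfalso
        have hvS : v ∈ affineSpan ℝ (W \ {v}) := by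
          apply hhyp (W \ {v}) Set.diff_subset (by rw [← hWQ]; exact hc)
          exact ⟨v', right_mem_segment ℝ v v', hv'S⟩
        have hWsub : W ⊆ (affineSpan ℝ (W \ {v}) : Set V) := by
          intro w hw
          by_cases hwv : w = v
          · exact hwv ▸ hvS
          · exact subset_affineSpan ℝ _ ⟨hw, hwv⟩
        haveI : FiniteDimensional ℝ (affineSpan ℝ (W \ {v})).direction := by
          rw [direction_affineSpan]
          exact finiteDimensional_vectorSpan_of_finite ℝ (hWfin.diff (t := {v}))
        have h2 := adim_le_of_subset_affine hWsub
        rw [direction_affineSpan] at h2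
        have h3 : Module.finrank ℝ (vectorSpan ℝ (W \ {v})) = adim (W \ {v}) := rfl
        omega
      · have hSne : (W \ {v}).Nonempty := by
          rcases Set.eq_empty_or_nonempty (W \ {v}) with he | hne
          · exfalso
            have : W ⊆ {v} := by
              intro w hw
              by_contra hwv
              exact absurd ⟨hw, hwv⟩ (he ▸ Set.notMem_empty w)
            have h4 : adim W ≤ adim ({v} : Set V) :=
              adim_mono (Set.finite_singleton v) this
            have h5 : adim ({v} : Set V) = 0 := by
              rw [adim, vectorSpan_singleton]; simp
            have h6 : adim (W \ {v}) = 0 := by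
              rw [he, adim, vectorSpan_empty]; simp
            omega
          · exact hne
        have h7 := adim_insert_of_not_mem (hWfin.diff (t := {v})) hSne hv'S
        have h8 : (W \ {v}) ∪ {v'} = insert v' (W \ {v}) := Set.union_singleton
        rw [hadimT, h8, h7, hc, hWQ]

end PushSetup


/-! ### Face structure -/

section FaceStruct

open Set Module

variable {V : Type*} [AddCommGroup V] [Module ℝ V] {Q Q' : Set V} {v v' : V}

/-- Structure of a face of a polytope given as hull of a finite set. -/
lemma face_struct {S : Set V} (hS : S.Finite) (hSne : S.Nonempty) {F : Set V}
    (hF : IsFaceOf F (convexHull ℝ S)) :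
    ∃ (l : V →ₗ[ℝ] ℝ) (m : ℝ), (∀ s ∈ S, l s ≤ m) ∧ (S ∩ F).Nonempty ∧
      S ∩ F = {s ∈ S | l s = m} ∧ F = convexHull ℝ (S ∩ F) ∧
      F = {x ∈ convexHull ℝ S | l x = m} := by
  obtain ⟨l, m, hub, hex, hF1, hF2⟩ := face_package hS hSne hF
  have hSF : S ∩ F = {s ∈ S | l s = m} := by
    apply Set.Subset.antisymm
    · rintro s ⟨hsS, hsF⟩
      rw [hF2] at hsF
      exact ⟨hsS, hsF.2⟩
    · rintro s ⟨hsS, hsm⟩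
      refine ⟨hsS, ?_⟩
      rw [hF2]
      exact ⟨subset_convexHull ℝ S hsS, hsm⟩
  obtain ⟨s, hsS, hsm⟩ := hex
  refine ⟨l, m, hub, ⟨s, hSF ▸ ⟨hsS, hsm⟩⟩, hSF, ?_, hF2⟩
  rw [hSF]; exact hF1

lemma empty_not_face {P F : Set V} (hP : IsPolytope P) (hPne : P.Nonempty)
    (hF : IsFaceOf F P) : F.Nonempty := by
  obtain ⟨S, hS, rfl⟩ := hP
  have hSne : S.Nonempty := by
    rcases S.eq_empty_or_nonempty with rfl | h
    · simp at hPne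
    · exact h
  exact face_nonempty hS hSne hF

/-- The vertex set of a face of a polytope. -/
lemma face_vertexSet {P F : Set V} (hP : IsPolytope P) (hF : IsFaceOf F P) :
    vertexSet F = vertexSet P ∩ F := by
  have hPfin := vertexSet_finite hP
  have hPhull := polytope_hull_vertexSet hP
  rcases Set.eq_empty_or_nonempty (vertexSet P) with he | hne
  · obtain ⟨l, hl⟩ := hF
    have hPe : P = ∅ := by rw [hPhull, he]; simp
    have hFe : F = ∅ := by
      rw [hl, hPe]
      simp
    rw [hFe, he, Set.empty_inter]
    apply Set.eq_empty_of_subset_empty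
    exact fun x hx => absurd (vertexOf_mem hx) (Set.notMem_empty x)
  · have hF' : IsFaceOf F (convexHull ℝ (vertexSet P)) := hPhull ▸ hF
    obtain ⟨l, m, hub, hSFne, hSF, hF1, hF2⟩ := face_struct hPfin hne hF'
    apply Set.Subset.antisymm
    · intro x hx
      have h1 : x ∈ vertexSet P ∩ F := by
        have := vertexSet_hull_subset (hPfin.inter_of_left F)
        rw [← hF1] at this
        exact this hx
      exact h1
    · rintro x ⟨hxP, hxF⟩
      exact vertexOf_face hF hxP hxF

/-- Two facets of `Q` containing a common set of dimension `adim Q - 1` agree. -/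
lemma facet_unique_of_span (h : ObtainedByPushing Q Q' v v') {S₀ : Set V}
    (hS₀ne : S₀.Nonempty) (hS₀d : adim S₀ + 1 = adim Q)
    {G₁ G₂ : Set V} (hG₁ : IsFacetOf G₁ Q) (hG₂ : IsFacetOf G₂ Q)
    (h₁ : S₀ ⊆ G₁) (h₂ : S₀ ⊆ G₂) : G₁ = G₂ := by
  obtain ⟨x₀, hx₀⟩ := hS₀ne
  have key : ∀ G : Set V, IsFacetOf G Q → S₀ ⊆ G → G = Q ∩ (affineSpan ℝ S₀ : Set V) := by
    intro G hG hsub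
    haveI : FiniteDimensional ℝ (affineSpan ℝ G).direction := by
      rw [direction_affineSpan]
      exact push_fd_vectorSpan h (isFaceOf_subset hG.1)
    have hle : affineSpan ℝ S₀ ≤ affineSpan ℝ G := affineSpan_mono ℝ hsub
    have hdim : Module.finrank ℝ (affineSpan ℝ G).direction
        ≤ Module.finrank ℝ (affineSpan ℝ S₀).direction := by
      rw [← adim_eq_finrank_direction, ← adim_eq_finrank_direction]
      have := hG.2
      omega
    have heq : affineSpan ℝ S₀ = affineSpan ℝ G :=
      affine_eq_of_le_of_dim_le hle ⟨x₀, subset_affineSpan ℝ S₀ hx₀⟩ hdim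
    have := face_eq_inter_affineSpan hG.1 (hsub hx₀)
    rw [this, ← heq]
  rw [key G₁ hG₁ h₁, key G₂ hG₂ h₂]

end FaceStruct


/-! ### The v' pickup lemma -/

section ZLemma

open Set Module

variable {V : Type*} [AddCommGroup V] [Module ℝ V] {Q Q' : Set V} {v v' : V}

/-- If `v'` happens to be a vertex of `Q`, then every facet of `Q` containing `v`
contains `v'` as well. -/
lemma push_v'_in_facet (h : ObtainedByPushing Q Q' v v') (hvv' : v ≠ v')
    (hv'W : v' ∈ vertexSet Q) {G₂ : Set V} (hG₂ : IsFacetOf G₂ Q) (hvG₂ : v ∈ G₂) :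
    v' ∈ G₂ := by
  have hhyp := h.2.2.2.2.2
  set W := vertexSet Q with hWdef
  have hWfin : W.Finite := push_Wfin h
  have hQhull : Q = convexHull ℝ W := push_Qhull h
  have hWne : W.Nonempty := ⟨v, push_vW h⟩
  have hG₂' : IsFaceOf G₂ (convexHull ℝ W) := hQhull ▸ hG₂.1
  obtain ⟨l₂, m₂, hub₂, hXne, hXeq, hG₂hull, hG₂lvl⟩ := face_struct hWfin hWne hG₂'
  set X : Set V := W ∩ G₂ with hXdef
  have hXfin : X.Finite := hWfin.inter_of_left _
  have hXspan : affineSpan ℝ X = affineSpan ℝ G₂ := by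
    conv_rhs => rw [hG₂hull]
    rw [affineSpan_convexHull]
  have hXW : X ⊆ W := Set.inter_subset_left
  have hfacetdim : adim G₂ + 1 = adim Q := hG₂.2
  -- it suffices to show v' lies in the affine span of G₂
  suffices hv'span : v' ∈ affineSpan ℝ G₂ by
    have hG₂int := face_eq_inter_affineSpan hG₂.1 hvG₂
    rw [hG₂int]
    exact ⟨vertexOf_mem hv'W, hv'span⟩
  by_contra hv'span
  haveI hfdG₂ : FiniteDimensional ℝ (affineSpan ℝ G₂).direction := by
    rw [direction_affineSpan]
    exact push_fd_vectorSpan h (isFaceOf_subset hG₂.1)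
  have hdimG₂ : Module.finrank ℝ (affineSpan ℝ G₂).direction = adim G₂ :=
    (adim_eq_finrank_direction _).symm
  have hrec : ∀ j : ℕ, j + 1 ≤ adim Q →
      ∃ Z : Set V, Z ⊆ X ∧ adim (Z ∪ {v'}) = j ∧ v ∉ affineSpan ℝ (Z ∪ {v'}) := by
    intro j
    induction j with
    | zero =>
      intro _
      refine ⟨∅, Set.empty_subset X, ?_, ?_⟩
      · rw [Set.empty_union, adim, vectorSpan_singleton]; simp
      · rw [Set.empty_union]
        intro hmem
        exact hvv' ((AffineSubspace.mem_affineSpan_singleton ℝ V).1 hmem)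
    | succ j ih =>
      intro hj
      obtain ⟨Z, hZX, hZd, hZv⟩ := ih (by omega)
      have hZfin : Z.Finite := hXfin.subset hZX
      have hZ'fin : (Z ∪ {v'}).Finite := hZfin.union (Set.finite_singleton v')
      have hZ'ne : (Z ∪ {v'}).Nonempty := ⟨v', Set.mem_union_right _ rfl⟩
      set M := affineSpan ℝ (Z ∪ {v'}) with hMdef
      haveI hfdM : FiniteDimensional ℝ M.direction := by
        rw [hMdef, direction_affineSpan]
        exact finiteDimensional_vectorSpan_of_finite ℝ hZ'fin
      have hdimM : Module.finrank ℝ M.direction = j := by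
        rw [hMdef, ← adim_eq_finrank_direction, hZd]
      -- there is a vertex of G₂ outside M
      have hexx : ∃ x ∈ X, x ∉ M := by
        by_contra hc
        push_neg at hc
        have hle : affineSpan ℝ G₂ ≤ M := by
          rw [← hXspan, affineSpan_le]
          exact fun x hx => hc x hx
        have := finrank_le_of_le (AffineSubspace.direction_le hle)
        rw [hdimM, hdimG₂] at this
        omega
      obtain ⟨x₁, hx₁X, hx₁M⟩ := hexx
      have hN : ∀ x : V, x ∉ M →
          adim (insert x (Z ∪ {v'})) = j + 1 := by
        intro x hxM
        rw [adim_insert_of_not_mem hZ'fin hZ'ne hxM, hZd]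
      have hMN : ∀ x : V, M ≤ affineSpan ℝ (insert x (Z ∪ {v'})) := fun x =>
        affineSpan_mono ℝ (Set.subset_insert x _)
      have hfdN : ∀ x : V, FiniteDimensional ℝ (affineSpan ℝ (insert x (Z ∪ {v'}))).direction := by
        intro x
        rw [direction_affineSpan]
        exact finiteDimensional_vectorSpan_of_finite ℝ (hZ'fin.insert x)
      -- main claim : some x₂ outside M also keeps v outside
      by_cases hgood : ∃ x ∈ X, x ∉ M ∧ v ∉ affineSpan ℝ (insert x (Z ∪ {v'}))
      · obtain ⟨x, hxX, hxM, hxv⟩ := hgood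
        refine ⟨insert x Z, Set.insert_subset hxX hZX, ?_, ?_⟩
        · rw [Set.insert_union, hN x hxM]
        · rw [Set.insert_union]
          exact hxv
      · push_neg at hgood
        set N₁ := affineSpan ℝ (insert x₁ (Z ∪ {v'})) with hN₁def
        haveI := hfdN x₁
        have hvN₁ : v ∈ N₁ := hgood x₁ hx₁X hx₁M
        have hdimN₁ : Module.finrank ℝ N₁.direction = j + 1 := by
          rw [hN₁def, ← adim_eq_finrank_direction, hN x₁ hx₁M]
        have hv'N₁ : v' ∈ N₁ :=
          subset_affineSpan ℝ _ (Set.mem_insert_of_mem _ (Set.mem_union_right _ rfl))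
        by_cases hall2 : ∀ x ∈ X, x ∉ M → x ∈ N₁
        · exfalso
          have hle : affineSpan ℝ G₂ ≤ N₁ := by
            rw [← hXspan, affineSpan_le]
            intro x hx
            by_cases hxM : x ∈ M
            · exact hMN x₁ hxM
            · exact hall2 x hx hxM
          have heq : affineSpan ℝ G₂ = N₁ := by
            apply affine_eq_of_le_of_dim_le hle
            · obtain ⟨x₀, hx₀⟩ := hXne
              exact ⟨x₀, (hXspan ▸ subset_affineSpan ℝ X hx₀ : x₀ ∈ affineSpan ℝ G₂)⟩
            · rw [hdimN₁, hdimG₂]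
              omega
          exact hv'span (heq ▸ hv'N₁)
        · push_neg at hall2
          obtain ⟨x₂, hx₂X, hx₂M, hx₂N₁⟩ := hall2
          set N₂ := affineSpan ℝ (insert x₂ (Z ∪ {v'})) with hN₂def
          haveI := hfdN x₂
          have hvN₂ : v ∈ N₂ := hgood x₂ hx₂X hx₂M
          have hdimN₂ : Module.finrank ℝ N₂.direction = j + 1 := by
            rw [hN₂def, ← adim_eq_finrank_direction, hN x₂ hx₂M]
          have hx₂N₂ : x₂ ∈ N₂ := subset_affineSpan ℝ _ (Set.mem_insert x₂ _)
          have hv'K : v' ∈ N₁ ⊓ N₂ := by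
            rw [AffineSubspace.mem_inf_iff]
            exact ⟨hv'N₁,
              subset_affineSpan ℝ _ (Set.mem_insert_of_mem _ (Set.mem_union_right _ rfl))⟩
          have hMK : M ≤ N₁ ⊓ N₂ := le_inf (hMN x₁) (hMN x₂)
          have hKneN₁ : N₁ ⊓ N₂ ≠ N₁ := by
            intro heq
            have hle12 : N₁ ≤ N₂ := heq ▸ inf_le_right
            have : N₁ = N₂ := by
              apply affine_eq_of_le_of_dim_le hle12 ⟨v', hv'N₁⟩
              rw [hdimN₁, hdimN₂]
            exact hx₂N₁ (this ▸ hx₂N₂)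
          haveI hfdK : FiniteDimensional ℝ (N₁ ⊓ N₂).direction :=
            Submodule.finiteDimensional_of_le (AffineSubspace.direction_le inf_le_left)
          have hdimK : Module.finrank ℝ (N₁ ⊓ N₂).direction < j + 1 := by
            rw [← hdimN₁]
            exact affine_dim_lt inf_le_left ⟨v', hv'K⟩ hKneN₁
          have hMKeq : M = N₁ ⊓ N₂ := by
            apply affine_eq_of_le_of_dim_le hMK ⟨v', subset_affineSpan ℝ _ (Set.mem_union_right _ rfl)⟩
            rw [hdimM]
            omega
          exfalso
          apply hZv
          rw [hMKeq, AffineSubspace.mem_inf_iff]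
          exact ⟨hvN₁, hvN₂⟩
  have hd1 : 1 ≤ adim Q := by omega
  obtain ⟨Z, hZX, hZd, hZv⟩ := hrec (adim Q - 1) (by omega)
  apply hZv
  apply hhyp (Z ∪ {v'}) (Set.union_subset (hZX.trans hXW) (by
    intro x hx; rw [Set.mem_singleton_iff] at hx; exact hx ▸ hv'W))
    (by rw [hZd]; omega)
  exact ⟨v', right_mem_segment ℝ v v', subset_affineSpan ℝ _ (Set.mem_union_right _ rfl)⟩

end ZLemma


/-! ### Root and span-level helpers -/

section RootSpan

open Set Module

variable {V : Type*} [AddCommGroup V] [Module ℝ V]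

lemma exists_root_on_segment {l : V →ₗ[ℝ] ℝ} {c : ℝ} {a b : V}
    (hsign : (l a - c) * (l b - c) ≤ 0) : ∃ z ∈ segment ℝ a b, l z = c := by
  set α := l a - c with hα'
  set β := l b - c with hβ'
  by_cases hα : α = 0
  · exact ⟨a, left_mem_segment ℝ a b, by rw [← sub_eq_zero]; exact hα⟩
  · have hαβ : α - β ≠ 0 := by
      intro h0
      have hab : α = β := by linarith
      rw [← hab] at hsign
      rcases lt_or_gt_of_ne hα with hh | hh
      · nlinarith
      · nlinarith
    set t := α / (α - β) with ht'
    have htmul : t * (α - β) = α := div_mul_cancel₀ α hαβ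
    have hval : (1 - t) * α + t * β = 0 := by linear_combination -htmul
    have ht01 : 0 ≤ t ∧ t ≤ 1 := by
      rcases lt_or_gt_of_ne hα with hneg | hpos
      · have hβpos : 0 ≤ β := by nlinarith
        have hd : α - β < 0 := by linarith
        constructor
        · exact le_of_lt (div_pos_of_neg_of_neg hneg hd)
        · rw [div_le_one_of_neg hd]
          linarith
      · have hβneg : β ≤ 0 := by nlinarith
        have hd : 0 < α - β := by linarith
        constructor
        · positivity
        · rw [div_le_one hd]
          linarith
    refine ⟨(1 - t) • a + t • b, ?_, ?_⟩
    · rw [segment_eq_image]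
      exact ⟨t, ⟨ht01.1, ht01.2⟩, rfl⟩
    · have : l ((1 - t) • a + t • b) = (1 - t) * l a + t * l b := by
        simp [map_add, map_smul, smul_eq_mul]
      rw [this]
      have hla : l a = α + c := by rw [hα']; ring
      have hlb : l b = β + c := by rw [hβ']; ring
      rw [hla, hlb]
      nlinarith [hval]

/-- If a set `S` of dimension at least `dim A - 1` lies in `A` and on the level
set `l = c`, and `l` is non-constant on `A`, then the affine span of `S` is
exactly the part of `A` where `l = c`. -/
lemma span_eq_inf_level {A : AffineSubspace ℝ V} [FiniteDimensional ℝ A.direction]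
    {S : Set V} {l : V →ₗ[ℝ] ℝ} {c : ℝ}
    (hSA : S ⊆ (A : Set V)) (hSl : ∀ x ∈ S, l x = c) (hSne : S.Nonempty)
    (hdim : Module.finrank ℝ A.direction ≤ adim S + 1)
    (hx : ∃ x ∈ (A : Set V), l x ≠ c) :
    affineSpan ℝ S = A ⊓ lvl l c := by
  obtain ⟨s₀, hs₀⟩ := hSne
  have hle : affineSpan ℝ S ≤ A ⊓ lvl l c := by
    rw [affineSpan_le]
    intro x hxS
    rw [AffineSubspace.mem_coe, AffineSubspace.mem_inf_iff]
    exact ⟨hSA hxS, hSl x hxS⟩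
  haveI hfdinf : FiniteDimensional ℝ (A ⊓ lvl l c).direction :=
    Submodule.finiteDimensional_of_le (AffineSubspace.direction_le inf_le_left)
  have hne' : A ⊓ lvl l c ≠ A := by
    intro heq
    obtain ⟨x, hxA, hxc⟩ := hx
    have hx2 : x ∈ A ⊓ lvl l c := by rw [heq]; exact hxA
    rw [AffineSubspace.mem_inf_iff] at hx2
    exact hxc hx2.2
  have hlt : Module.finrank ℝ (A ⊓ lvl l c).direction < Module.finrank ℝ A.direction := by
    apply affine_dim_lt inf_le_left _ hne'
    exact ⟨s₀, hle (subset_affineSpan ℝ S hs₀)⟩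
  apply affine_eq_of_le_of_dim_le hle ⟨s₀, subset_affineSpan ℝ S hs₀⟩
  rw [← adim_eq_finrank_direction]
  omega

end RootSpan


/-! ### The key facet correspondence -/

section KeyFacet

open Set Module

variable {V : Type*} [AddCommGroup V] [Module ℝ V] {Q Q' : Set V} {v v' : V}

set_option maxHeartbeats 2000000 in
lemma key_facet (h : ObtainedByPushing Q Q' v v') (hvv' : v ≠ v') {F' : Set V}
    (hF' : IsFacetOf F' Q') :
    ∃ G : Set V, (IsFacetOf G Q ∧ pushVerts F' v v' ⊆ G) ∧
      (∀ G₂, IsFacetOf G₂ Q → pushVerts F' v v' ⊆ G₂ → G₂ = G) ∧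
      (v' ∈ F' → v ∈ affineSpan ℝ (vertexSet F') → v' ∈ G) := by
  have hvQ : v ∈ Q := vertexOf_mem h.2.1
  have hv'Q : v' ∈ Q := h.2.2.1
  have hQ'def := h.2.2.2.1
  have hvs := h.2.2.2.2.1
  have hhyp := h.2.2.2.2.2
  have hWfin : (vertexSet Q).Finite := push_Wfin h
  have hQhull : Q = convexHull ℝ (vertexSet Q) := push_Qhull h
  have hvW : v ∈ vertexSet Q := push_vW h
  have hTfin := push_Tfin h
  have hTsubQ := push_TsubQ h
  have hQsubA := push_QsubA h
  haveI hfdA := push_fdA h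
  have hfrA := push_finrankA h
  set W := vertexSet Q with hWdef
  set T := (W \ {v}) ∪ {v'} with hTdef
  have hQ'poly : IsPolytope Q' := ⟨T, hTfin, hQ'def⟩
  have hQ'd : adim Q' = adim Q := push_adimQ' h
  have hdF' : adim F' + 1 = adim Q := by rw [← hQ'd]; exact hF'.2
  have hv'T : v' ∈ T := Set.mem_union_right _ rfl
  have hTne : T.Nonempty := ⟨v', hv'T⟩
  have hF'' : IsFaceOf F' (convexHull ℝ T) := hQ'def ▸ hF'.1
  obtain ⟨l, m, hub, hUne', hUeq, hF'hull, hF'lvl⟩ := face_struct hTfin hTne hF''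
  set U := T ∩ F' with hUdef
  have hUne : U.Nonempty := hUne'
  have hUfin : U.Finite := hTfin.inter_of_left _
  have hUsubT : U ⊆ T := Set.inter_subset_left
  have hUsubQ : U ⊆ Q := hUsubT.trans hTsubQ
  have hUlm : ∀ u ∈ U, l u = m := by
    intro u hu
    have : u ∈ {s | s ∈ T ∧ l s = m} := hUeq ▸ hu
    exact this.2
  have hUd : adim U + 1 = adim Q := by
    have h1 : adim F' = adim U := by rw [hF'hull, adim_hull]
    omega
  have hvsF : vertexSet F' = U := by
    rw [face_vertexSet hQ'poly hF'.1, hvs]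
  have hUlvl : ∀ x ∈ affineSpan ℝ U, l x = m := fun x hx => affineSpan_le_lvl hUlm hx
  have ht₀ : ∃ t₀ ∈ T, l t₀ < m := by
    by_contra hc
    push_neg at hc
    have hTU : T ⊆ U := fun t ht => hUeq ▸ ⟨ht, le_antisymm (hub t ht) (hc t ht)⟩
    have h1 : adim T ≤ adim U := adim_mono hUfin hTU
    have h2 : adim Q' = adim T := by rw [hQ'def, adim_hull]
    omega
  have hstrict : ∃ x ∈ Q, l x ≠ m := by
    obtain ⟨t₀, ht₀T, ht₀l⟩ := ht₀
    exact ⟨t₀, hTsubQ ht₀T, ne_of_lt ht₀l⟩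
  have hspanU : affineSpan ℝ U = affineSpan ℝ W ⊓ lvl l m := by
    apply span_eq_inf_level (fun u hu => hQsubA (hUsubQ hu)) hUlm hUne
    · rw [hfrA]; omega
    · obtain ⟨t₀, ht₀T, ht₀l⟩ := ht₀
      exact ⟨t₀, hQsubA (hTsubQ ht₀T), ne_of_lt ht₀l⟩
  have hmemU : ∀ x : V, x ∈ (affineSpan ℝ W : Set V) → l x = m → x ∈ affineSpan ℝ U := by
    intro x hxA hxm
    rw [hspanU, AffineSubspace.mem_inf_iff]
    exact ⟨hxA, hxm⟩
  -- face and facet constructors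
  have mkface : ∀ (l₁ : V →ₗ[ℝ] ℝ) (m₁ : ℝ), (∀ w ∈ W, l₁ w ≤ m₁) → (∃ w ∈ W, l₁ w = m₁) →
      IsFaceOf {x ∈ Q | l₁ x = m₁} Q := by
    intro l₁ m₁ hub₁ hex₁
    refine ⟨l₁, ?_⟩
    rw [hQhull]
    exact (argmax_eq_level hub₁ hex₁).symm
  have mkfacet : ∀ (l₁ : V →ₗ[ℝ] ℝ) (m₁ : ℝ), (∀ w ∈ W, l₁ w ≤ m₁) → (∃ w ∈ W, l₁ w = m₁) →
      ∀ S₁ : Set V, S₁ ⊆ {x ∈ Q | l₁ x = m₁} → adim S₁ + 1 = adim Q →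
      (∃ x ∈ Q, l₁ x ≠ m₁) → IsFacetOf {x ∈ Q | l₁ x = m₁} Q := by
    intro l₁ m₁ hub₁ hex₁ S₁ hS₁ hS₁d hstrict₁
    refine ⟨mkface l₁ m₁ hub₁ hex₁, ?_⟩
    have hGsubQ : {x ∈ Q | l₁ x = m₁} ⊆ Q := fun x hx => hx.1
    haveI := push_fd_vectorSpan h hGsubQ
    have hlow : adim S₁ ≤ adim {x ∈ Q | l₁ x = m₁} :=
      finrank_le_of_le (vectorSpan_mono ℝ hS₁)
    have hup : adim {x ∈ Q | l₁ x = m₁} + 1 ≤ adim Q := by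
      haveI : FiniteDimensional ℝ ((affineSpan ℝ W ⊓ lvl l₁ m₁)).direction :=
        Submodule.finiteDimensional_of_le (AffineSubspace.direction_le inf_le_left)
      have hsub : {x ∈ Q | l₁ x = m₁}
          ⊆ ((affineSpan ℝ W ⊓ lvl l₁ m₁ : AffineSubspace ℝ V) : Set V) := by
        rintro x ⟨hxQ, hxm⟩
        rw [AffineSubspace.mem_coe, AffineSubspace.mem_inf_iff]
        exact ⟨hQsubA hxQ, hxm⟩
      have h1 := adim_le_of_subset_affine hsub
      have h2 : Module.finrank ℝ (affineSpan ℝ W ⊓ lvl l₁ m₁).direction < adim Q := by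
        rw [← hfrA]
        apply affine_dim_lt inf_le_left
        · obtain ⟨w, hwW, hwm⟩ := hex₁
          refine ⟨w, ?_⟩
          rw [AffineSubspace.mem_coe, AffineSubspace.mem_inf_iff]
          exact ⟨hQsubA (vertexOf_mem hwW), hwm⟩
        · intro heq
          obtain ⟨x, hxQ, hxm⟩ := hstrict₁
          have hx2 : x ∈ affineSpan ℝ W ⊓ lvl l₁ m₁ := by rw [heq]; exact hQsubA hxQ
          exact hxm ((AffineSubspace.mem_inf_iff _ _ _).1 hx2).2
      omega
    omega
  by_cases hv'F : v' ∈ F'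
  case neg =>
    -- Case 1 : v' not in F'
    have hpv : pushVerts F' v v' = U := by
      unfold pushVerts
      rw [if_neg hv'F]
      exact hvsF
    have hUW : U ⊆ W \ {v} := by
      intro u hu
      rcases hUsubT hu with h1 | h1
      · exact h1
      · exfalso
        apply hv'F
        rw [← Set.mem_singleton_iff.1 h1]
        exact hu.2
    have hlvm : l v ≤ m := by
      by_contra hlv
      push_neg at hlv
      have hv'm : l v' ≤ m := hub v' hv'T
      obtain ⟨z, hzseg, hzm⟩ := exists_root_on_segment (l := l) (c := m) (a := v) (b := v')
        (by nlinarith)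
      have hzA : z ∈ (affineSpan ℝ W : Set V) :=
        (affineSpan ℝ W).convex.segment_subset (subset_affineSpan ℝ W hvW) (hQsubA hv'Q) hzseg
      have hzU : z ∈ affineSpan ℝ U := hmemU z hzA hzm
      have hvU : v ∈ affineSpan ℝ U :=
        hhyp U (hUW.trans Set.diff_subset) hUd ⟨z, hzseg, hzU⟩
      have := hUlvl v hvU
      linarith
    have hubQ : ∀ w ∈ W, l w ≤ m := by
      intro w hw
      by_cases hwv : w = v
      · exact hwv ▸ hlvm
      · exact hub w (Set.mem_union_left _ ⟨hw, hwv⟩)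
    obtain ⟨u₁, hu₁U⟩ := id hUne
    have hexQ : ∃ w ∈ W, l w = m := ⟨u₁, (hUW hu₁U).1, hUlm u₁ hu₁U⟩
    have hUG : U ⊆ {x ∈ Q | l x = m} := fun u hu => ⟨hUsubQ hu, hUlm u hu⟩
    have hG : IsFacetOf {x ∈ Q | l x = m} Q := mkfacet l m hubQ hexQ U hUG hUd hstrict
    refine ⟨{x ∈ Q | l x = m}, ⟨hG, ?_⟩, ?_, ?_⟩
    · rw [hpv]; exact hUG
    · intro G₂ hG₂ hsub₂
      exact facet_unique_of_span h hUne hUd hG₂ hG (hpv ▸ hsub₂) hUG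
    · intro hv'F'
      exact absurd hv'F' hv'F
  case pos =>
    -- Case 2 : v' ∈ F'
    have hU₀W : U \ {v'} ⊆ W \ {v} := by
      intro u hu
      rcases hUsubT hu.1 with h1 | h1
      · exact h1
      · exact absurd (Set.mem_singleton_iff.1 h1) hu.2
    have hv'U : v' ∈ U := ⟨hv'T, hv'F⟩
    have hpv : pushVerts F' v v' = (U \ {v'}) ∪ {v} := by
      unfold pushVerts
      rw [if_pos hv'F, hvsF]
    by_cases hdone : adim Q = 1
    · -- dimension one
      have hU0 : adim U = 0 := by omega
      haveI := push_fd_vectorSpan h hUsubQ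
      have hUv' : U ⊆ {v'} := fun u hu => convex_adim_zero hU0 hu hv'U
      have hU₀e : U \ {v'} = ∅ := by
        apply Set.eq_empty_of_subset_empty
        intro u hu
        exact absurd (hUv' hu.1) hu.2
      have hGfacet : IsFacetOf {v} Q := by
        constructor
        · exact h.2.1
        · have : adim ({v} : Set V) = 0 := by rw [adim, vectorSpan_singleton]; simp
          omega
      refine ⟨{v}, ⟨hGfacet, ?_⟩, ?_, ?_⟩
      · rw [hpv, hU₀e, Set.empty_union]
      · intro G₂ hG₂ hsub₂
        have hvG₂ : v ∈ G₂ := (hpv ▸ hsub₂) (Set.mem_union_right _ rfl)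
        haveI := push_fd_vectorSpan h (isFaceOf_subset hG₂.1)
        have hG₂0 : adim G₂ = 0 := by have := hG₂.2; omega
        apply Set.Subset.antisymm
        · intro x hx
          have : x = v := convex_adim_zero hG₂0 hx hvG₂
          exact this ▸ rfl
        · intro x hx
          rw [Set.mem_singleton_iff] at hx
          exact hx ▸ hvG₂
      · intro _ hvspan
        exfalso
        rw [hvsF] at hvspan
        have hUeq2 : U = {v'} := Set.Subset.antisymm hUv' (Set.singleton_subset_iff.2 hv'U)
        rw [hUeq2] at hvspan
        exact hvv' ((AffineSubspace.mem_affineSpan_singleton ℝ V).1 hvspan)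
    · have hd2 : 2 ≤ adim Q := by omega
      have hU₀ne : (U \ {v'}).Nonempty := by
        rcases Set.eq_empty_or_nonempty (U \ {v'}) with he | hne
        · exfalso
          have hUsub : U ⊆ {v'} := by
            intro u hu
            by_contra huv
            exact absurd ⟨hu, huv⟩ (he ▸ Set.notMem_empty u)
          have h4 : adim U ≤ adim ({v'} : Set V) := adim_mono (Set.finite_singleton v') hUsub
          have h5 : adim ({v'} : Set V) = 0 := by rw [adim, vectorSpan_singleton]; simp
          omega
        · exact hne
      have hU₀fin : (U \ {v'}).Finite := hUfin.diff (t := {v'})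
      have hbounds : adim (U \ {v'}) + 1 = adim Q ∨ adim (U \ {v'}) + 2 = adim Q := by
        have h1 : adim U ≤ adim (U \ {v'}) + 1 := adim_diff_singleton hUfin v'
        have h2 : adim (U \ {v'}) ≤ adim U := adim_mono hUfin Set.diff_subset
        omega
      haveI hfdspanU : FiniteDimensional ℝ (affineSpan ℝ U).direction := by
        rw [direction_affineSpan]
        exact finiteDimensional_vectorSpan_of_finite ℝ hUfin
      rcases hbounds with hcaseA | hcaseB
      · -- Case (a)
        have hspanU₀U : affineSpan ℝ (U \ {v'}) = affineSpan ℝ U := by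
          apply affine_eq_of_le_of_dim_le (affineSpan_mono ℝ Set.diff_subset)
          · obtain ⟨u₀, hu₀⟩ := hU₀ne
            exact ⟨u₀, subset_affineSpan ℝ _ hu₀⟩
          · rw [← adim_eq_finrank_direction, ← adim_eq_finrank_direction]
            omega
        have hvU₀ : v ∈ affineSpan ℝ (U \ {v'}) := by
          apply hhyp _ (hU₀W.trans Set.diff_subset) hcaseA
          refine ⟨v', right_mem_segment ℝ v v', ?_⟩
          rw [hspanU₀U]
          exact subset_affineSpan ℝ U hv'U
        have hlv : l v = m := hUlvl v (hspanU₀U ▸ hvU₀)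
        have hubQ : ∀ w ∈ W, l w ≤ m := by
          intro w hw
          by_cases hwv : w = v
          · exact hwv ▸ hlv.le
          · exact hub w (Set.mem_union_left _ ⟨hw, hwv⟩)
        have hexQ : ∃ w ∈ W, l w = m := ⟨v, hvW, hlv⟩
        have hUG : U ⊆ {x ∈ Q | l x = m} := fun u hu => ⟨hUsubQ hu, hUlm u hu⟩
        have hG : IsFacetOf {x ∈ Q | l x = m} Q := mkfacet l m hubQ hexQ U hUG hUd hstrict
        refine ⟨{x ∈ Q | l x = m}, ⟨hG, ?_⟩, ?_, ?_⟩
        · rw [hpv]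
          apply Set.union_subset
          · exact fun u hu => hUG (Set.diff_subset hu)
          · intro x hx
            rw [Set.mem_singleton_iff] at hx
            exact hx ▸ ⟨hvQ, hlv⟩
        · intro G₂ hG₂ hsub₂
          apply facet_unique_of_span h hU₀ne hcaseA hG₂ hG
          · exact fun u hu => (hpv ▸ hsub₂) (Set.mem_union_left _ hu)
          · exact fun u hu => hUG (Set.diff_subset hu)
        · intro _ _
          exact ⟨hv'Q, hUlm v' hv'U⟩
      · -- Case (b) : adim U₀ + 2 = adim Q
        have hv'span₀ : v' ∉ affineSpan ℝ (U \ {v'}) := by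
          intro hmem
          have hUsub : U ⊆ (affineSpan ℝ (U \ {v'}) : Set V) := by
            intro u hu
            by_cases huv : u = v'
            · exact huv ▸ hmem
            · exact subset_affineSpan ℝ _ ⟨hu, huv⟩
          haveI : FiniteDimensional ℝ (affineSpan ℝ (U \ {v'})).direction := by
            rw [direction_affineSpan]
            exact finiteDimensional_vectorSpan_of_finite ℝ hU₀fin
          have h6 := adim_le_of_subset_affine hUsub
          rw [← adim_eq_finrank_direction] at h6
          omega
        by_cases hvU₀ : v ∈ affineSpan ℝ (U \ {v'})
        · -- Case (b') : v ∈ span U₀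
          have hlv : l v = m := hUlvl v (affineSpan_mono ℝ Set.diff_subset hvU₀)
          have hubQ : ∀ w ∈ W, l w ≤ m := by
            intro w hw
            by_cases hwv : w = v
            · exact hwv ▸ hlv.le
            · exact hub w (Set.mem_union_left _ ⟨hw, hwv⟩)
          have hexQ : ∃ w ∈ W, l w = m := ⟨v, hvW, hlv⟩
          have hUG : U ⊆ {x ∈ Q | l x = m} := fun u hu => ⟨hUsubQ hu, hUlm u hu⟩
          have hG : IsFacetOf {x ∈ Q | l x = m} Q := mkfacet l m hubQ hexQ U hUG hUd hstrict
          have hv'G : v' ∈ {x ∈ Q | l x = m} := ⟨hv'Q, hUlm v' hv'U⟩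
          have hvG : v ∈ {x ∈ Q | l x = m} := ⟨hvQ, hlv⟩
          have hv'W : v' ∈ W := by
            by_contra hv'W
            have hGhull : {x ∈ Q | l x = m} = convexHull ℝ {w ∈ W | l w = m} := by
              rw [hQhull]
              exact level_hull_eq hubQ
            have hWm : {w ∈ W | l w = m} ⊆ (affineSpan ℝ (U \ {v'}) : Set V) := by
              rintro w ⟨hwW, hwm⟩
              by_cases hwv : w = v
              · exact hwv ▸ hvU₀
              · have hwT : w ∈ T := Set.mem_union_left _ ⟨hwW, hwv⟩
                have hwU : w ∈ U := hUeq ▸ ⟨hwT, hwm⟩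
                have hwv' : w ≠ v' := by
                  rintro rfl
                  exact hv'W hwW
                exact subset_affineSpan ℝ _ ⟨hwU, hwv'⟩
            apply hv'span₀
            have h1 : v' ∈ convexHull ℝ {w ∈ W | l w = m} := hGhull ▸ hv'G
            have h2 := (convexHull_subset_affineSpan _) h1
            have h3 : affineSpan ℝ {w ∈ W | l w = m} ≤ affineSpan ℝ (U \ {v'}) := by
              rw [affineSpan_le]
              exact hWm
            exact h3 h2
          refine ⟨{x ∈ Q | l x = m}, ⟨hG, ?_⟩, ?_, ?_⟩
          · rw [hpv]
            apply Set.union_subset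
            · exact fun u hu => hUG (Set.diff_subset hu)
            · intro x hx
              rw [Set.mem_singleton_iff] at hx
              exact hx ▸ hvG
          · intro G₂ hG₂ hsub₂
            have hvG₂ : v ∈ G₂ := (hpv ▸ hsub₂) (Set.mem_union_right _ rfl)
            have hv'G₂ : v' ∈ G₂ := push_v'_in_facet h hvv' hv'W hG₂ hvG₂
            have hUG₂ : U ⊆ G₂ := by
              intro u hu
              by_cases huv : u = v'
              · exact huv ▸ hv'G₂
              · exact (hpv ▸ hsub₂) (Set.mem_union_left _ ⟨hu, huv⟩)
            exact facet_unique_of_span h hUne hUd hG₂ hG hUG₂ hUG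
          · intro _ _
            exact hv'G
        · -- Case (b'') : the rotated functional
          obtain ⟨u₀, hu₀U₀⟩ := id hU₀ne
          have hu₀span : u₀ ∈ affineSpan ℝ (U \ {v'}) := subset_affineSpan ℝ _ hu₀U₀
          have hv'dir : v' -ᵥ u₀ ∉ (affineSpan ℝ (U \ {v'})).direction := by
            intro hmem
            exact hv'span₀ ((AffineSubspace.vsub_right_mem_direction_iff_mem hu₀span v').1 hmem)
          obtain ⟨k₀, hk₀0, hk₀v'⟩ := exists_functional_vanishing hv'dir
          have hk₀v'' : k₀ (v' - u₀) = 1 := by rw [← vsub_eq_sub]; exact hk₀v'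
          set p : ℝ := k₀ (v - u₀) with hpdef
          set q : ℝ := l v - m with hqdef
          set L : V →ₗ[ℝ] ℝ := p • l - q • k₀ with hLdef
          set c : ℝ := p * m - q * (k₀ u₀) with hcdef
          have hLx : ∀ x : V, L x - c = p * (l x - m) - q * (k₀ (x - u₀)) := by
            intro x
            rw [hLdef, hcdef]
            simp only [LinearMap.sub_apply, LinearMap.smul_apply, smul_eq_mul, map_sub]
            ring
          have hkU₀ : ∀ u ∈ U \ {v'}, k₀ (u - u₀) = 0 := by
            intro u hu
            have h1 : u -ᵥ u₀ ∈ (affineSpan ℝ (U \ {v'})).direction :=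
              (AffineSubspace.vsub_right_mem_direction_iff_mem hu₀span u).2
                (subset_affineSpan ℝ _ hu)
            rw [vsub_eq_sub] at h1
            exact hk₀0 _ h1
          have hLU₀ : ∀ u ∈ U \ {v'}, L u = c := by
            intro u hu
            have h1 := hLx u
            rw [hUlm u (Set.diff_subset hu), hkU₀ u hu] at h1
            have h2 : L u - c = 0 := by rw [h1]; ring
            linarith
          have hLv : L v = c := by
            have h1 := hLx v
            rw [← hpdef, ← hqdef] at h1
            have h2 : L v - c = 0 := by rw [h1]; ring
            linarith
          have hLv' : L v' - c = -q := by
            have h1 := hLx v'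
            rw [hk₀v'', hUlm v' hv'U] at h1
            rw [h1]; ring
          have hker : ∀ x : V, x ∈ (affineSpan ℝ W : Set V) → l x = m → k₀ (x - u₀) = 0 →
              x ∈ affineSpan ℝ (U \ {v'}) := by
            intro x hxA hxm hxk
            have hxU : x ∈ affineSpan ℝ U := hmemU x hxA hxm
            have hsp : affineSpan ℝ (U \ {v'}) = affineSpan ℝ U ⊓ lvl k₀ (k₀ u₀) := by
              apply span_eq_inf_level
              · exact fun u hu => subset_affineSpan ℝ U (Set.diff_subset hu)
              · intro u hu
                have h2 : k₀ u - k₀ u₀ = 0 := by rw [← map_sub]; exact hkU₀ u hu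
                linarith
              · exact hU₀ne
              · rw [← adim_eq_finrank_direction]; omega
              · refine ⟨v', subset_affineSpan ℝ U hv'U, ?_⟩
                have h3 : k₀ v' - k₀ u₀ = 1 := by rw [← map_sub]; exact hk₀v''
                intro h4
                rw [h4] at h3
                simp at h3
            rw [hsp, AffineSubspace.mem_inf_iff]
            refine ⟨hxU, ?_⟩
            show k₀ x = k₀ u₀
            have h5 : k₀ x - k₀ u₀ = 0 := by rw [← map_sub]; exact hxk
            linarith
          have hWbound : ∀ w ∈ W, L w ≤ c := by
            intro w hw
            by_cases hwv : w = v
            · rw [hwv, hLv]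
            · have hwT : w ∈ T := Set.mem_union_left _ ⟨hw, hwv⟩
              have hwm : l w ≤ m := hub w hwT
              rcases eq_or_lt_of_le hwm with heq | hlt
              · have hwU : w ∈ U := hUeq ▸ ⟨hwT, heq⟩
                by_cases hwv' : w = v'
                · -- w = v' is a vertex of Q : conclude q = 0
                  subst hwv'
                  have hS₂W : insert w (U \ {w}) ⊆ W :=
                    Set.insert_subset hw (hU₀W.trans Set.diff_subset)
                  have hS₂d : adim (insert w (U \ {w})) + 1 = adim Q := by
                    rw [adim_insert_of_not_mem hU₀fin hU₀ne hv'span₀]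
                    omega
                  have hspan₂ : affineSpan ℝ (insert w (U \ {w})) = affineSpan ℝ U := by
                    apply affine_eq_of_le_of_dim_le
                    · rw [affineSpan_le]
                      intro x hx
                      rcases Set.mem_insert_iff.1 hx with rfl | hx
                      · exact subset_affineSpan ℝ U hv'U
                      · exact subset_affineSpan ℝ U (Set.diff_subset hx)
                    · exact ⟨w, subset_affineSpan ℝ _ (Set.mem_insert _ _)⟩
                    · rw [← adim_eq_finrank_direction, ← adim_eq_finrank_direction,
                        adim_insert_of_not_mem hU₀fin hU₀ne hv'span₀]
                      omega
                  have hvS₂ : v ∈ affineSpan ℝ (insert w (U \ {w})) := by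
                    apply hhyp _ hS₂W hS₂d
                    exact ⟨w, right_mem_segment ℝ v w,
                      subset_affineSpan ℝ _ (Set.mem_insert _ _)⟩
                  have hlvm : l v = m := hUlvl v (hspan₂ ▸ hvS₂)
                  have hq0 : q = 0 := by rw [hqdef, hlvm]; ring
                  have := hLv'
                  rw [hq0] at this
                  linarith
                · -- w ∈ U₀
                  have h2 : L w = c := hLU₀ w ⟨hwU, hwv'⟩
                  linarith
              · -- l w < m : the rotation argument
                by_contra hLw
                push_neg at hLw
                set Lw : V →ₗ[ℝ] ℝ := (k₀ (w - u₀)) • l - (l w - m) • k₀ with hLwdef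
                set cw : ℝ := (k₀ (w - u₀)) * m - (l w - m) * (k₀ u₀) with hcwdef
                have hLwx : ∀ x : V, Lw x - cw
                    = (k₀ (w - u₀)) * (l x - m) - (l w - m) * (k₀ (x - u₀)) := by
                  intro x
                  rw [hLwdef, hcwdef]
                  simp only [LinearMap.sub_apply, LinearMap.smul_apply, smul_eq_mul, map_sub]
                  ring
                have hLwv : Lw v - cw = -(L w - c) := by
                  rw [hLwx v, hLx w, ← hpdef, ← hqdef]
                  ring
                have hLwv' : Lw v' - cw = m - l w := by
                  rw [hLwx v', hk₀v'', hUlm v' hv'U]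
                  ring
                have hsign : (Lw v - cw) * (Lw v' - cw) ≤ 0 := by
                  rw [hLwv, hLwv']
                  nlinarith
                obtain ⟨z, hzseg, hzcw⟩ := exists_root_on_segment hsign
                have hzA : z ∈ (affineSpan ℝ W : Set V) :=
                  (affineSpan ℝ W).convex.segment_subset
                    (subset_affineSpan ℝ W hvW) (hQsubA hv'Q) hzseg
                have hwspan₀ : w ∉ affineSpan ℝ (U \ {v'}) := by
                  intro hmem
                  have := hUlvl w (affineSpan_mono ℝ Set.diff_subset hmem)
                  linarith
                have hSwd : adim (insert w (U \ {v'})) + 1 = adim Q := by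
                  rw [adim_insert_of_not_mem hU₀fin hU₀ne hwspan₀]
                  omega
                have hSwsub : insert w (U \ {v'}) ⊆ W :=
                  Set.insert_subset hw (hU₀W.trans Set.diff_subset)
                have hconstSw : ∀ x ∈ insert w (U \ {v'}), Lw x = cw := by
                  intro x hx
                  rcases Set.mem_insert_iff.1 hx with rfl | hx
                  · have h2 : Lw x - cw = 0 := by rw [hLwx x]; ring
                    linarith
                  · have h2 : Lw x - cw = 0 := by
                      rw [hLwx x, hUlm x (Set.diff_subset hx), hkU₀ x hx]
                      ring
                    linarith
                have hLwvne : Lw v ≠ cw := by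
                  intro h0
                  rw [h0, sub_self] at hLwv
                  have : L w = c := by linarith
                  rw [this] at hLw
                  exact lt_irrefl _ hLw
                have hspanSw : affineSpan ℝ (insert w (U \ {v'}))
                    = affineSpan ℝ W ⊓ lvl Lw cw := by
                  apply span_eq_inf_level
                  · intro x hx
                    exact hQsubA (vertexOf_mem (hSwsub hx))
                  · exact hconstSw
                  · exact ⟨w, Set.mem_insert _ _⟩
                  · rw [hfrA]
                    omega
                  · exact ⟨v, subset_affineSpan ℝ W hvW, hLwvne⟩
                have hzSw : z ∈ affineSpan ℝ (insert w (U \ {v'})) := by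
                  rw [hspanSw, AffineSubspace.mem_inf_iff]
                  exact ⟨hzA, hzcw⟩
                have hvSw : v ∈ affineSpan ℝ (insert w (U \ {v'})) :=
                  hhyp _ hSwsub hSwd ⟨z, hzseg, hzSw⟩
                exact hLwvne (affineSpan_le_lvl hconstSw hvSw)
          have hexQ : ∃ w ∈ W, L w = c := ⟨v, hvW, hLv⟩
          have hS₁d : adim (insert v (U \ {v'})) + 1 = adim Q := by
            rw [adim_insert_of_not_mem hU₀fin hU₀ne hvU₀]
            omega
          have hS₁G : insert v (U \ {v'}) ⊆ {x ∈ Q | L x = c} := by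
            intro x hx
            rcases Set.mem_insert_iff.1 hx with rfl | hx
            · exact ⟨hvQ, hLv⟩
            · exact ⟨hUsubQ (Set.diff_subset hx), hLU₀ x hx⟩
          have hstrict2 : ∃ x ∈ Q, L x ≠ c := by
            by_cases hq0 : q = 0
            · have hp0 : p ≠ 0 := by
                intro hp0
                apply hvU₀
                apply hker v (subset_affineSpan ℝ W hvW)
                · rw [hqdef] at hq0
                  linarith
                · rw [← hpdef]
                  exact hp0
              obtain ⟨t₀, ht₀T, ht₀l⟩ := ht₀
              refine ⟨t₀, hTsubQ ht₀T, ?_⟩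
              intro h0
              have h1 := hLx t₀
              rw [h0, sub_self, hq0] at h1
              have h2 : p * (l t₀ - m) = 0 := by linarith
              rcases mul_eq_zero.1 h2 with h3 | h3
              · exact hp0 h3
              · have : l t₀ = m := by linarith
                linarith
            · refine ⟨v', hv'Q, ?_⟩
              intro h0
              rw [h0, sub_self] at hLv'
              exact hq0 (by linarith)
          have hG : IsFacetOf {x ∈ Q | L x = c} Q :=
            mkfacet L c hWbound hexQ _ hS₁G hS₁d hstrict2
          refine ⟨{x ∈ Q | L x = c}, ⟨hG, ?_⟩, ?_, ?_⟩
          · rw [hpv]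
            intro x hx
            rcases hx with hx | hx
            · exact hS₁G (Set.mem_insert_of_mem _ hx)
            · rw [Set.mem_singleton_iff] at hx
              exact hx ▸ hS₁G (Set.mem_insert _ _)
          · intro G₂ hG₂ hsub₂
            apply facet_unique_of_span h (⟨v, Set.mem_insert v _⟩ :
              (insert v (U \ {v'})).Nonempty) hS₁d hG₂ hG _ hS₁G
            intro x hx
            rcases Set.mem_insert_iff.1 hx with rfl | hx
            · exact (hpv ▸ hsub₂) (Set.mem_union_right _ rfl)
            · exact (hpv ▸ hsub₂) (Set.mem_union_left _ hx)
          · intro _ hvspan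
            rw [hvsF] at hvspan
            have hlvm : l v = m := hUlvl v hvspan
            have hq0 : q = 0 := by rw [hqdef, hlvm]; ring
            refine ⟨hv'Q, ?_⟩
            rw [hq0] at hLv'
            linarith

end KeyFacet


/-! ### Ridge correspondence -/

section KeyRidge

open Set Module

variable {V : Type*} [AddCommGroup V] [Module ℝ V] {Q Q' : Set V} {v v' : V}

lemma push_face_data (h : ObtainedByPushing Q Q' v v') {F' : Set V} (hF' : IsFaceOf F' Q') :
    vertexSet F' = ((vertexSet Q \ {v}) ∪ {v'}) ∩ F'
    ∧ F' = convexHull ℝ (((vertexSet Q \ {v}) ∪ {v'}) ∩ F')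
    ∧ (((vertexSet Q \ {v}) ∪ {v'}) ∩ F').Nonempty
    ∧ adim (((vertexSet Q \ {v}) ∪ {v'}) ∩ F') = adim F' := by
  have hQ'def := h.2.2.2.1
  have hvs := h.2.2.2.2.1
  have hTfin := push_Tfin h
  have hTne : ((vertexSet Q \ {v}) ∪ {v'}).Nonempty := ⟨v', Set.mem_union_right _ rfl⟩
  have hF'' : IsFaceOf F' (convexHull ℝ ((vertexSet Q \ {v}) ∪ {v'})) := hQ'def ▸ hF'
  obtain ⟨l, m, hub, hUne, hUeq, hF'hull, hF'lvl⟩ := face_struct hTfin hTne hF''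
  have hQ'poly : IsPolytope Q' := ⟨_, hTfin, hQ'def⟩
  have h1 : vertexSet F' = ((vertexSet Q \ {v}) ∪ {v'}) ∩ F' := by
    rw [face_vertexSet hQ'poly hF', hvs]
  refine ⟨h1, hF'hull, hUne, ?_⟩
  conv_rhs => rw [hF'hull]
  rw [adim_hull]

set_option maxHeartbeats 2000000 in
lemma key_ridge (h : ObtainedByPushing Q Q' v v') {F₁ F₂ G₁ G₂ : Set V}
    (hF₁ : IsFacetOf F₁ Q') (hF₂ : IsFacetOf F₂ Q') (hne : F₁ ≠ F₂)
    (hR : IsRidgeOf (F₁ ∩ F₂) Q')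
    (hG₁ : IsFacetOf G₁ Q) (hG₂ : IsFacetOf G₂ Q)
    (hs₁ : pushVerts F₁ v v' ⊆ G₁) (hs₂ : pushVerts F₂ v v' ⊆ G₂)
    (henr₁ : v' ∈ F₁ → v ∈ affineSpan ℝ (vertexSet F₁) → v' ∈ G₁)
    (henr₂ : v' ∈ F₂ → v ∈ affineSpan ℝ (vertexSet F₂) → v' ∈ G₂)
    (hGne : G₁ ≠ G₂) : IsRidgeOf (G₁ ∩ G₂) Q := by
  have hv'Q : v' ∈ Q := h.2.2.1
  have hvQ : v ∈ Q := vertexOf_mem h.2.1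
  have hhyp := h.2.2.2.2.2
  have hWfin := push_Wfin h
  have hQhull := push_Qhull h
  have hvW := push_vW h
  have hTfin := push_Tfin h
  have hTsubQ := push_TsubQ h
  have hQsubA := push_QsubA h
  haveI hfdA := push_fdA h
  have hfrA := push_finrankA h
  have hQ'd := push_adimQ' h
  set W := vertexSet Q with hWdef
  set T := (W \ {v}) ∪ {v'} with hTdef
  have hv'T : v' ∈ T := Set.mem_union_right _ rfl
  obtain ⟨hvs₁, hhull₁, hne₁, hadim₁⟩ := push_face_data h hF₁.1
  obtain ⟨hvs₂, hhull₂, hne₂, hadim₂⟩ := push_face_data h hF₂.1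
  obtain ⟨hvsR, hhullR, hneR, hadimR⟩ := push_face_data h hR.1
  set U₁ := T ∩ F₁ with hU₁def
  set U₂ := T ∩ F₂ with hU₂def
  set UR := T ∩ (F₁ ∩ F₂) with hURdef
  have hURsub₁ : UR ⊆ U₁ := fun u hu => ⟨hu.1, hu.2.1⟩
  have hURsub₂ : UR ⊆ U₂ := fun u hu => ⟨hu.1, hu.2.2⟩
  have hU₁d : adim U₁ + 1 = adim Q := by rw [hadim₁, ← hQ'd]; exact hF₁.2
  have hU₂d : adim U₂ + 1 = adim Q := by rw [hadim₂, ← hQ'd]; exact hF₂.2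
  have hURd : adim UR + 2 = adim Q := by rw [hadimR, ← hQ'd]; exact hR.2
  have hd2 : 2 ≤ adim Q := by omega
  have hU₁fin : U₁.Finite := hTfin.inter_of_left _
  have hU₂fin : U₂.Finite := hTfin.inter_of_left _
  have hURfin : UR.Finite := hTfin.inter_of_left _
  have hU₁subQ : U₁ ⊆ Q := fun u hu => hTsubQ hu.1
  have hU₂subQ : U₂ ⊆ Q := fun u hu => hTsubQ hu.1
  have hURsubQ : UR ⊆ Q := fun u hu => hTsubQ hu.1
  haveI hfdU₁ : FiniteDimensional ℝ (affineSpan ℝ U₁).direction := by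
    rw [direction_affineSpan]; exact finiteDimensional_vectorSpan_of_finite ℝ hU₁fin
  haveI hfdU₂ : FiniteDimensional ℝ (affineSpan ℝ U₂).direction := by
    rw [direction_affineSpan]; exact finiteDimensional_vectorSpan_of_finite ℝ hU₂fin
  haveI hfdUR : FiniteDimensional ℝ (affineSpan ℝ UR).direction := by
    rw [direction_affineSpan]; exact finiteDimensional_vectorSpan_of_finite ℝ hURfin
  -- membership in W for elements of T different from v'
  have hTmemW : ∀ x ∈ T, x ≠ v' → x ∈ W := by
    intro x hx hxv'
    rcases hx with h1 | h1
    · exact h1.1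
    · exact absurd (Set.mem_singleton_iff.1 h1) hxv'
  -- main case analysis for the lower bound
  have hmain : (G₁ ∩ G₂).Nonempty ∧
      (adim Q = 2 ∨ ∃ D : Set V, D ⊆ G₁ ∩ G₂ ∧ adim D + 2 = adim Q) := by
    by_cases hv'R : v' ∈ F₁ ∩ F₂
    · -- v' in the ridge
      have hv'F₁ : v' ∈ F₁ := hv'R.1
      have hv'F₂ : v' ∈ F₂ := hv'R.2
      have hv'UR : v' ∈ UR := ⟨hv'T, hv'R⟩
      have hv'U₁ : v' ∈ U₁ := ⟨hv'T, hv'F₁⟩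
      have hv'U₂ : v' ∈ U₂ := ⟨hv'T, hv'F₂⟩
      have hpv₁ : pushVerts F₁ v v' = (U₁ \ {v'}) ∪ {v} := by
        unfold pushVerts; rw [if_pos hv'F₁, hvs₁]
      have hpv₂ : pushVerts F₂ v v' = (U₂ \ {v'}) ∪ {v} := by
        unfold pushVerts; rw [if_pos hv'F₂, hvs₂]
      have hvG₁ : v ∈ G₁ := hs₁ (hpv₁ ▸ Set.mem_union_right _ rfl)
      have hvG₂ : v ∈ G₂ := hs₂ (hpv₂ ▸ Set.mem_union_right _ rfl)
      refine ⟨⟨v, hvG₁, hvG₂⟩, ?_⟩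
      by_cases hd2' : adim Q = 2
      · exact Or.inl hd2'
      · right
        have hd3 : 3 ≤ adim Q := by omega
        set X := UR \ {v'} with hXdef
        have hXfin : X.Finite := hURfin.diff (t := {v'})
        have hXsubW : X ⊆ W := fun x hx => hTmemW x hx.1.1 hx.2
        have hXUR : X ⊆ UR := Set.diff_subset
        have hXG₁ : X ⊆ G₁ := fun x hx =>
          hs₁ (hpv₁ ▸ Set.mem_union_left _ ⟨hURsub₁ hx.1, hx.2⟩)
        have hXG₂ : X ⊆ G₂ := fun x hx =>
          hs₂ (hpv₂ ▸ Set.mem_union_left _ ⟨hURsub₂ hx.1, hx.2⟩)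
        have hXne : X.Nonempty := by
          rcases Set.eq_empty_or_nonempty X with he | hne'
          · exfalso
            have hURsub : UR ⊆ {v'} := by
              intro u hu
              by_contra huv
              exact absurd ⟨hu, huv⟩ (he ▸ Set.notMem_empty u)
            have h4 : adim UR ≤ adim ({v'} : Set V) :=
              adim_mono (Set.finite_singleton v') hURsub
            have h5 : adim ({v'} : Set V) = 0 := by rw [adim, vectorSpan_singleton]; simp
            omega
          · exact hne'
        have hXbounds : adim X + 2 = adim Q ∨ adim X + 3 = adim Q := by
          have h1 : adim UR ≤ adim X + 1 := adim_diff_singleton hURfin v'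
          have h2 : adim X ≤ adim UR := adim_mono hURfin hXUR
          omega
        rcases hXbounds with hα | hβ
        · -- (α) : X spans UR ∋ v'
          have hspanX : affineSpan ℝ X = affineSpan ℝ UR := by
            apply affine_eq_of_le_of_dim_le (affineSpan_mono ℝ hXUR)
            · obtain ⟨x, hx⟩ := hXne
              exact ⟨x, subset_affineSpan ℝ _ hx⟩
            · rw [← adim_eq_finrank_direction, ← adim_eq_finrank_direction]
              omega
          have hv'X : v' ∈ affineSpan ℝ X := by
            rw [hspanX]; exact subset_affineSpan ℝ _ hv'UR
          -- choose w₁ in U₁ off the span of UR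
          have hw₁ : ∃ w ∈ U₁, w ∉ affineSpan ℝ UR := by
            by_contra hc
            push_neg at hc
            have h6 := adim_le_of_subset_affine (A := affineSpan ℝ UR) (fun x hx => hc x hx)
            rw [← adim_eq_finrank_direction] at h6
            omega
          obtain ⟨w₁, hw₁U₁, hw₁span⟩ := hw₁
          have hw₁v' : w₁ ≠ v' := by
            rintro rfl
            exact hw₁span (subset_affineSpan ℝ _ hv'UR)
          have hw₁W : w₁ ∈ W := hTmemW w₁ hw₁U₁.1 hw₁v'
          have hw₁X : w₁ ∉ affineSpan ℝ X := by rw [hspanX]; exact hw₁span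
          have hS₁d : adim (insert w₁ X) + 1 = adim Q := by
            rw [adim_insert_of_not_mem hXfin hXne hw₁X]; omega
          have hvS₁ : v ∈ affineSpan ℝ (insert w₁ X) := by
            apply hhyp _ (Set.insert_subset hw₁W hXsubW) hS₁d
            exact ⟨v', right_mem_segment ℝ v v',
              affineSpan_mono ℝ (Set.subset_insert _ _) hv'X⟩
          have hleU₁ : affineSpan ℝ (insert w₁ X) ≤ affineSpan ℝ U₁ := by
            rw [affineSpan_le]
            intro x hx
            rcases Set.mem_insert_iff.1 hx with rfl | hx
            · exact subset_affineSpan ℝ _ hw₁U₁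
            · exact subset_affineSpan ℝ _ (hURsub₁ (hXUR hx))
          have hv'G₁' : v' ∈ G₁ := henr₁ hv'F₁ (by rw [hvs₁]; exact hleU₁ hvS₁)
          -- choose w₂ in U₂ off the span of U₁
          have hw₂ : ∃ w ∈ U₂, w ∉ affineSpan ℝ U₁ := by
            by_contra hc
            push_neg at hc
            have hle : affineSpan ℝ U₂ ≤ affineSpan ℝ U₁ := by
              rw [affineSpan_le]; exact fun x hx => hc x hx
            have heq : affineSpan ℝ U₂ = affineSpan ℝ U₁ := by
              apply affine_eq_of_le_of_dim_le hle
              · exact ⟨v', subset_affineSpan ℝ _ hv'U₂⟩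
              · rw [← adim_eq_finrank_direction, ← adim_eq_finrank_direction]
                omega
            apply hne
            have hq₁ : F₁ = Q' ∩ (affineSpan ℝ F₁ : Set V) :=
              face_eq_inter_affineSpan hF₁.1 (hne₁.some_mem.2)
            have hq₂ : F₂ = Q' ∩ (affineSpan ℝ F₂ : Set V) :=
              face_eq_inter_affineSpan hF₂.1 (hne₂.some_mem.2)
            have hsp₁ : affineSpan ℝ F₁ = affineSpan ℝ U₁ := by
              conv_lhs => rw [hhull₁]
              rw [affineSpan_convexHull]
            have hsp₂ : affineSpan ℝ F₂ = affineSpan ℝ U₂ := by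
              conv_lhs => rw [hhull₂]
              rw [affineSpan_convexHull]
            rw [hq₁, hq₂, hsp₁, hsp₂, heq]
          obtain ⟨w₂, hw₂U₂, hw₂span⟩ := hw₂
          have hw₂v' : w₂ ≠ v' := by
            rintro rfl
            exact hw₂span (subset_affineSpan ℝ _ hv'U₁)
          have hw₂W : w₂ ∈ W := hTmemW w₂ hw₂U₂.1 hw₂v'
          have hw₂X : w₂ ∉ affineSpan ℝ X := by
            intro hmem
            apply hw₂span
            have : affineSpan ℝ X ≤ affineSpan ℝ U₁ := by
              rw [hspanX]
              exact affineSpan_mono ℝ hURsub₁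
            exact this hmem
          have hS₂d : adim (insert w₂ X) + 1 = adim Q := by
            rw [adim_insert_of_not_mem hXfin hXne hw₂X]; omega
          have hvS₂ : v ∈ affineSpan ℝ (insert w₂ X) := by
            apply hhyp _ (Set.insert_subset hw₂W hXsubW) hS₂d
            exact ⟨v', right_mem_segment ℝ v v',
              affineSpan_mono ℝ (Set.subset_insert _ _) hv'X⟩
          have hleU₂ : affineSpan ℝ (insert w₂ X) ≤ affineSpan ℝ U₂ := by
            rw [affineSpan_le]
            intro x hx
            rcases Set.mem_insert_iff.1 hx with rfl | hx
            · exact subset_affineSpan ℝ _ hw₂U₂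
            · exact subset_affineSpan ℝ _ (hURsub₂ (hXUR hx))
          have hv'G₂' : v' ∈ G₂ := henr₂ hv'F₂ (by rw [hvs₂]; exact hleU₂ hvS₂)
          refine ⟨UR, ?_, hURd⟩
          intro u hu
          by_cases huv' : u = v'
          · exact huv' ▸ ⟨hv'G₁', hv'G₂'⟩
          · exact ⟨hXG₁ ⟨hu, huv'⟩, hXG₂ ⟨hu, huv'⟩⟩
        · -- (β)
          by_cases hvX : v ∈ affineSpan ℝ X
          · -- v in the span of X : both G's contain v'
            have hv'G₁' : v' ∈ G₁ := by
              apply henr₁ hv'F₁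
              rw [hvs₁]
              exact affineSpan_mono ℝ (fun x hx => hURsub₁ (hXUR hx)) hvX
            have hv'G₂' : v' ∈ G₂ := by
              apply henr₂ hv'F₂
              rw [hvs₂]
              exact affineSpan_mono ℝ (fun x hx => hURsub₂ (hXUR hx)) hvX
            refine ⟨UR, ?_, hURd⟩
            intro u hu
            by_cases huv' : u = v'
            · exact huv' ▸ ⟨hv'G₁', hv'G₂'⟩
            · exact ⟨hXG₁ ⟨hu, huv'⟩, hXG₂ ⟨hu, huv'⟩⟩
          · -- v off the span of X : use insert v X
            refine ⟨insert v X, ?_, ?_⟩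
            · intro x hx
              rcases Set.mem_insert_iff.1 hx with rfl | hx
              · exact ⟨hvG₁, hvG₂⟩
              · exact ⟨hXG₁ hx, hXG₂ hx⟩
            · rw [adim_insert_of_not_mem hXfin hXne hvX]
              omega
    · -- v' not in the ridge
      have hURG₁ : UR ⊆ G₁ := by
        intro u hu
        have huv' : u ≠ v' := by
          rintro rfl
          exact hv'R hu.2
        by_cases hv'F₁ : v' ∈ F₁
        · have hpv₁ : pushVerts F₁ v v' = (U₁ \ {v'}) ∪ {v} := by
            unfold pushVerts; rw [if_pos hv'F₁, hvs₁]
          exact hs₁ (hpv₁ ▸ Set.mem_union_left _ ⟨hURsub₁ hu, huv'⟩)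
        · have hpv₁ : pushVerts F₁ v v' = U₁ := by
            unfold pushVerts; rw [if_neg hv'F₁]; exact hvs₁
          exact hs₁ (hpv₁ ▸ hURsub₁ hu)
      have hURG₂ : UR ⊆ G₂ := by
        intro u hu
        have huv' : u ≠ v' := by
          rintro rfl
          exact hv'R hu.2
        by_cases hv'F₂ : v' ∈ F₂
        · have hpv₂ : pushVerts F₂ v v' = (U₂ \ {v'}) ∪ {v} := by
            unfold pushVerts; rw [if_pos hv'F₂, hvs₂]
          exact hs₂ (hpv₂ ▸ Set.mem_union_left _ ⟨hURsub₂ hu, huv'⟩)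
        · have hpv₂ : pushVerts F₂ v v' = U₂ := by
            unfold pushVerts; rw [if_neg hv'F₂]; exact hvs₂
          exact hs₂ (hpv₂ ▸ hURsub₂ hu)
      obtain ⟨u, hu⟩ := hneR
      exact ⟨⟨u, hURG₁ hu, hURG₂ hu⟩,
        Or.inr ⟨UR, fun x hx => ⟨hURG₁ hx, hURG₂ hx⟩, hURd⟩⟩
  obtain ⟨hKne, hlowD⟩ := hmain
  obtain ⟨x₀, hx₀⟩ := id hKne
  have hface : IsFaceOf (G₁ ∩ G₂) Q := isFaceOf_inter hG₁.1 hG₂.1 hKne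
  -- upper bound
  haveI hfdG₁ : FiniteDimensional ℝ (affineSpan ℝ G₁).direction := by
    rw [direction_affineSpan]
    exact push_fd_vectorSpan h (isFaceOf_subset hG₁.1)
  haveI hfdG₂ : FiniteDimensional ℝ (affineSpan ℝ G₂).direction := by
    rw [direction_affineSpan]
    exact push_fd_vectorSpan h (isFaceOf_subset hG₂.1)
  have hdimG₁ : Module.finrank ℝ (affineSpan ℝ G₁).direction + 1 = adim Q := by
    rw [← adim_eq_finrank_direction]; exact hG₁.2
  have hdimG₂ : Module.finrank ℝ (affineSpan ℝ G₂).direction + 1 = adim Q := by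
    rw [← adim_eq_finrank_direction]; exact hG₂.2
  have hGspan_ne : affineSpan ℝ G₁ ≠ affineSpan ℝ G₂ := by
    intro heq
    apply hGne
    rw [face_eq_inter_affineSpan hG₁.1 hx₀.1, face_eq_inter_affineSpan hG₂.1 hx₀.2, heq]
  have hMle : affineSpan ℝ (G₁ ∩ G₂) ≤ affineSpan ℝ G₁ ⊓ affineSpan ℝ G₂ :=
    le_inf (affineSpan_mono ℝ Set.inter_subset_left)
      (affineSpan_mono ℝ Set.inter_subset_right)
  have hx₀inf : x₀ ∈ affineSpan ℝ G₁ ⊓ affineSpan ℝ G₂ := by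
    rw [AffineSubspace.mem_inf_iff]
    exact ⟨subset_affineSpan ℝ _ hx₀.1, subset_affineSpan ℝ _ hx₀.2⟩
  have hinfne : affineSpan ℝ G₁ ⊓ affineSpan ℝ G₂ ≠ affineSpan ℝ G₁ := by
    intro heq
    apply hGspan_ne
    have hle : affineSpan ℝ G₁ ≤ affineSpan ℝ G₂ := by rw [← heq]; exact inf_le_right
    apply affine_eq_of_le_of_dim_le hle ⟨x₀, subset_affineSpan ℝ _ hx₀.1⟩
    omega
  haveI hfdinf : FiniteDimensional ℝ (affineSpan ℝ G₁ ⊓ affineSpan ℝ G₂).direction :=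
    Submodule.finiteDimensional_of_le (AffineSubspace.direction_le inf_le_left)
  have h1 : Module.finrank ℝ (affineSpan ℝ G₁ ⊓ affineSpan ℝ G₂).direction
      < Module.finrank ℝ (affineSpan ℝ G₁).direction :=
    affine_dim_lt inf_le_left ⟨x₀, hx₀inf⟩ hinfne
  have h2 : adim (G₁ ∩ G₂)
      ≤ Module.finrank ℝ (affineSpan ℝ G₁ ⊓ affineSpan ℝ G₂).direction := by
    rw [adim_eq_finrank_direction]
    exact finrank_le_of_le (AffineSubspace.direction_le hMle)
  refine ⟨hface, ?_⟩
  rcases hlowD with hd2' | ⟨D, hD, hDd⟩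
  · omega
  · haveI : FiniteDimensional ℝ (vectorSpan ℝ (G₁ ∩ G₂)) :=
      push_fd_vectorSpan h (Set.inter_subset_left.trans (isFaceOf_subset hG₁.1))
    have h3 : adim D ≤ adim (G₁ ∩ G₂) := finrank_le_of_le (vectorSpan_mono ℝ hD)
    omega

end KeyRidge


/-! ### Assembly -/

section Assembly

open Set Module

variable {V : Type*} [AddCommGroup V] [Module ℝ V]

noncomputable def pushPhi (Q : Set V) (v v' : V) : Set V → Set V := fun F' =>
  if hF' : ∃ G : Set V, (IsFacetOf G Q ∧ pushVerts F' v v' ⊆ G) ∧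
      (∀ G₂, IsFacetOf G₂ Q → pushVerts F' v v' ⊆ G₂ → G₂ = G) ∧
      (v' ∈ F' → v ∈ affineSpan ℝ (vertexSet F') → v' ∈ G)
    then hF'.choose else ∅

lemma pushPhi_spec {Q : Set V} {v v' : V} {F' : Set V}
    (hex : ∃ G : Set V, (IsFacetOf G Q ∧ pushVerts F' v v' ⊆ G) ∧
      (∀ G₂, IsFacetOf G₂ Q → pushVerts F' v v' ⊆ G₂ → G₂ = G) ∧
      (v' ∈ F' → v ∈ affineSpan ℝ (vertexSet F') → v' ∈ G)) :
    (IsFacetOf (pushPhi Q v v' F') Q ∧ pushVerts F' v v' ⊆ pushPhi Q v v' F') ∧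
      (∀ G₂, IsFacetOf G₂ Q → pushVerts F' v v' ⊆ G₂ → G₂ = pushPhi Q v v' F') ∧
      (v' ∈ F' → v ∈ affineSpan ℝ (vertexSet F') → v' ∈ pushPhi Q v v' F') := by
  unfold pushPhi
  rw [dif_pos hex]
  exact hex.choose_spec

end Assembly

/-- If `Q'` is obtained from `Q` by pushing `v` to `v' ∈ Q`,
then (1) for each facet `F'` of `Q'` there is a unique facet `φ F'` of `Q`
containing the corresponding vertex set, and (2) `φ` sends adjacent facets of
`Q'` to the same facet or to adjacent facets of `Q`. -/
theorem stmt6 {V : Type*} [AddCommGroup V] [Module ℝ V]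
    (Q Q' : Set V) (v v' : V) (h : ObtainedByPushing Q Q' v v') :
    ∃ φ : Set V → Set V,
      (∀ F', IsFacetOf F' Q' →
        (IsFacetOf (φ F') Q ∧ pushVerts F' v v' ⊆ φ F') ∧
        (∀ G, IsFacetOf G Q → pushVerts F' v v' ⊆ G → G = φ F')) ∧
      (∀ F₁ F₂, IsFacetOf F₁ Q' → IsFacetOf F₂ Q' → F₁ ≠ F₂ →
        IsRidgeOf (F₁ ∩ F₂) Q' →
        φ F₁ = φ F₂ ∨ (φ F₁ ≠ φ F₂ ∧ IsRidgeOf (φ F₁ ∩ φ F₂) Q)) := by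
  
  by_cases hvv' : v = v'
  · -- pushing the vertex to itself
    subst hvv'
    have hQ'Q : Q' = Q := by
      have hQ'def := h.2.2.2.1
      have hvW := push_vW h
      have h2 : (vertexSet Q \ {v}) ∪ {v} = vertexSet Q := by
        rw [Set.diff_union_self]
        exact Set.union_eq_self_of_subset_right (Set.singleton_subset_iff.2 hvW)
      rw [hQ'def, h2, ← push_Qhull h]
    refine ⟨fun F' => F', ?_, ?_⟩
    · intro F' hF'
      have hF'Q : IsFacetOf F' Q := by
        constructor
        · rw [← hQ'Q]; exact hF'.1
        · rw [← push_adimQ' h]; exact hF'.2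
      obtain ⟨hvsF, hhullF, hneF, hadimF⟩ := push_face_data h hF'.1
      have hpv : pushVerts F' v v = vertexSet F' := by
        unfold pushVerts
        by_cases hvF : v ∈ F'
        · rw [if_pos hvF]
          have hvvF : v ∈ vertexSet F' := by
            apply vertexOf_face hF'.1 _ hvF
            show IsVertexOf v Q'
            rw [hQ'Q]
            exact h.2.1
          rw [Set.diff_union_self]
          exact Set.union_eq_self_of_subset_right (Set.singleton_subset_iff.2 hvvF)
        · rw [if_neg hvF]
      refine ⟨⟨hF'Q, ?_⟩, ?_⟩
      · rw [hpv]; exact vertexSet_subset F'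
      · intro G hG hsub
        apply facet_unique_of_span h (S₀ := vertexSet F') ?_ ?_ hG hF'Q
          (hpv ▸ hsub) (vertexSet_subset F')
        · rw [hvsF]; exact hneF
        · rw [hvsF, hadimF, ← push_adimQ' h]; exact hF'.2
    · intro F₁ F₂ hF₁ hF₂ hne hridge
      right
      refine ⟨hne, ?_, ?_⟩
      · rw [← hQ'Q]; exact hridge.1
      · rw [← push_adimQ' h]; exact hridge.2
  · -- the genuine pushing case
    refine ⟨pushPhi Q v v', ?_, ?_⟩
    · intro F' hF'
      obtain ⟨h1, h2, _⟩ := pushPhi_spec (key_facet h hvv' hF')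
      exact ⟨h1, h2⟩
    · intro F₁ F₂ hF₁ hF₂ hne hridge
      by_cases hGeq : pushPhi Q v v' F₁ = pushPhi Q v v' F₂
      · exact Or.inl hGeq
      · right
        refine ⟨hGeq, ?_⟩
        obtain ⟨⟨hG₁, hs₁⟩, _, henr₁⟩ := pushPhi_spec (key_facet h hvv' hF₁)
        obtain ⟨⟨hG₂, hs₂⟩, _, henr₂⟩ := pushPhi_spec (key_facet h hvv' hF₂)
        exact key_ridge h hF₁ hF₂ hne hridge hG₁ hG₂ hs₁ hs₂ henr₁ henr₂ hGeq
end

section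
/- Let F₁ and F₂ be two facets of a polytope Q, let v be a vertex of Q, and let Q̃ = S_v(Q) be the one-point-suspension of Q at v with apices u and w. For i = 1,2, let F̃_i be the facet S_v(F_i) of Q̃ if v ∈ F_i, or either one of the facets F_i ∗ u or F_i ∗ w if v ∉ F_i. Then the dual distance between F̃₁ and F̃₂ in Q̃ is greater than or equal to the dual distance between F₁ and F₂ in Q. -/
open scoped Pointwise

variable {V : Type*} [AddCommGroup V] [Module ℝ V]

/-- `Qt` is the one-point-suspension of `Q` at the vertex `v`, with apices `u`
and `w`: `Q` lies in a hyperplane, `u` and `w` lie (strictly) on opposite sides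
of it, `v` is in the open segment `[u,w]`, and `Qt = conv (Q ∪ {u,w})`. -/
def IsOPS {V : Type*} [AddCommGroup V] [Module ℝ V]
    (Q Qt : Set V) (v u w : V) : Prop :=
  IsPolytope Q ∧ IsVertexOf v Q ∧
  (∃ (l : V →ₗ[ℝ] ℝ) (c : ℝ), (∀ x ∈ Q, l x = c) ∧ l u < c ∧ c < l w) ∧
  v ∈ openSegment ℝ u w ∧
  Qt = convexHull ℝ (Q ∪ {u, w})

section OPSHelpers

open Set

namespace OPSProof

variable {V : Type*} [AddCommGroup V] [Module ℝ V]

lemma faceOf_subset {F P : Set V} (h : IsFaceOf F P) : F ⊆ P := by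
  obtain ⟨l, rfl⟩ := h; exact fun x hx => hx.1

lemma faceOf_self (P : Set V) : IsFaceOf P P :=
  ⟨0, by ext x; simp⟩

lemma faceOf_convex {F P : Set V} (hP : Convex ℝ P) (h : IsFaceOf F P) : Convex ℝ F := by
  obtain ⟨l, rfl⟩ := h
  intro x hx y hy a b ha hb hab
  refine ⟨hP hx.1 hy.1 ha hb hab, fun z hz => ?_⟩
  have h1 := hx.2 z hz
  have h2 := hy.2 z hz
  have hl : l (a • x + b • y) = a * l x + b * l y := by
    simp [map_add, map_smul, smul_eq_mul]
  rw [hl]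
  calc l z = a * l z + b * l z := by rw [← add_mul, hab, one_mul]
    _ ≤ a * l x + b * l y :=
        add_le_add (mul_le_mul_of_nonneg_left h1 ha) (mul_le_mul_of_nonneg_left h2 hb)

lemma exists_max_on_hull {S : Set V} (hS : S.Finite) (hne : S.Nonempty) (l : V →ₗ[ℝ] ℝ) :
    ∃ x ∈ S, ∀ y ∈ convexHull ℝ S, l y ≤ l x := by
  obtain ⟨x, hxS, hx⟩ := Set.exists_max_image S l hS hne
  refine ⟨x, hxS, fun y hy => ?_⟩
  have hsub : convexHull ℝ S ⊆ {y | l y ≤ l x} :=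
    convexHull_min (fun s hs => hx s hs) (convex_halfSpace_le (LinearMap.isLinear l) _)
  exact hsub hy

lemma face_nonempty {F S : Set V} (hS : S.Finite)
    (hne : (convexHull ℝ S).Nonempty) (h : IsFaceOf F (convexHull ℝ S)) : F.Nonempty := by
  obtain ⟨l, rfl⟩ := h
  have hSne : S.Nonempty := convexHull_nonempty_iff.mp hne
  obtain ⟨x, hxS, hx⟩ := exists_max_on_hull hS hSne l
  exact ⟨x, subset_convexHull ℝ S hxS, fun y hy => hx y hy⟩

lemma face_eq_convexHull_inter {F S : Set V} (hS : S.Finite)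
    (h : IsFaceOf F (convexHull ℝ S)) : F = convexHull ℝ (S ∩ F) := by
  obtain ⟨l, hF⟩ := h
  apply Subset.antisymm
  · intro x hx
    have hxP : x ∈ convexHull ℝ S := (hF ▸ hx).1
    have hmax : ∀ y ∈ convexHull ℝ S, l y ≤ l x := (hF ▸ hx).2
    rw [← hS.coe_toFinset, Finset.convexHull_eq] at hxP
    obtain ⟨wt, hw0, hw1, hcm⟩ := hxP
    have hx_eq : ∑ y ∈ hS.toFinset, wt y • y = x := by
      rw [← hcm, Finset.centerMass_eq_of_sum_1 _ id hw1]; rfl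
    have hly : ∀ y ∈ hS.toFinset, l y ≤ l x := fun y hy =>
      hmax y (subset_convexHull ℝ S (hS.mem_toFinset.mp hy))
    have hlsum : ∑ y ∈ hS.toFinset, wt y * l y = l x := by
      rw [← hx_eq, map_sum]
      simp [map_smul, smul_eq_mul]
    have hsum0 : ∑ y ∈ hS.toFinset, wt y * (l x - l y) = 0 := by
      have hexp : ∀ y ∈ hS.toFinset, wt y * (l x - l y) = wt y * l x - wt y * l y :=
        fun y _ => by ring
      rw [Finset.sum_congr rfl hexp, Finset.sum_sub_distrib, ← Finset.sum_mul, hw1, hlsum]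
      ring
    have hzero : ∀ y ∈ hS.toFinset, wt y * (l x - l y) = 0 :=
      (Finset.sum_eq_zero_iff_of_nonneg (fun y hy =>
        mul_nonneg (hw0 y hy) (sub_nonneg.mpr (hly y hy)))).mp hsum0
    have hsupp : ∀ y ∈ hS.toFinset, wt y ≠ 0 → y ∈ S ∩ F := by
      intro y hy hwne
      have hyS : y ∈ S := hS.mem_toFinset.mp hy
      have hlxy : l x - l y = 0 := by
        rcases mul_eq_zero.mp (hzero y hy) with h' | h'
        · exact absurd h' hwne
        · exact h'
      have hyF : y ∈ F := by
        rw [hF]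
        refine ⟨subset_convexHull ℝ S hyS, fun z hz => ?_⟩
        have := hmax z hz
        linarith
      exact ⟨hyS, hyF⟩
    have hxcm : x = (hS.toFinset.filter (fun y => wt y ≠ 0)).centerMass wt id := by
      rw [Finset.centerMass_filter_ne_zero, Finset.centerMass_eq_of_sum_1 _ id hw1]
      exact hx_eq.symm
    rw [hxcm]
    apply Finset.centerMass_mem_convexHull
    · intro y hy; exact hw0 y (Finset.mem_filter.mp hy).1
    · rw [Finset.sum_filter_ne_zero, hw1]; norm_num
    · intro y hy
      obtain ⟨hy1, hy2⟩ := Finset.mem_filter.mp hy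
      exact hsupp y hy1 hy2
  · exact convexHull_min inter_subset_right (faceOf_convex (convex_convexHull ℝ S) ⟨l, hF⟩)

lemma face_inter_set {K P R : Set V} (hK : IsFaceOf K P) (hRP : R ⊆ P)
    (hne : (K ∩ R).Nonempty) : IsFaceOf (K ∩ R) R := by
  obtain ⟨l, hKeq⟩ := hK
  obtain ⟨z, hzK, hzR⟩ := hne
  refine ⟨l, ?_⟩
  ext x
  constructor
  · rintro ⟨hxK, hxR⟩
    exact ⟨hxR, fun y hy => (hKeq ▸ hxK).2 y (hRP hy)⟩
  · rintro ⟨hxR, hmax⟩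
    refine ⟨?_, hxR⟩
    rw [hKeq]
    refine ⟨hRP hxR, fun y hy => ?_⟩
    have h1 : l y ≤ l z := (hKeq ▸ hzK).2 y hy
    have h2 : l z ≤ l x := hmax z hzR
    linarith

lemma face_of_face_subset {K P R : Set V} (hK : IsFaceOf K P) (hRP : R ⊆ P)
    (hKR : K ⊆ R) (hne : K.Nonempty) : IsFaceOf K R := by
  have h : K ∩ R = K := inter_eq_left.mpr hKR
  have := face_inter_set hK hRP (by rw [h]; exact hne)
  rwa [h] at this

lemma face_inter_face {K K' P : Set V} (hK : IsFaceOf K P) (hK' : IsFaceOf K' P)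
    (hne : (K ∩ K').Nonempty) : IsFaceOf (K ∩ K') P := by
  obtain ⟨g, hg⟩ := hK
  obtain ⟨g', hg'⟩ := hK'
  obtain ⟨z, hzK, hzK'⟩ := hne
  refine ⟨g + g', ?_⟩
  ext x
  simp only [LinearMap.add_apply, mem_setOf_eq, mem_inter_iff]
  constructor
  · rintro ⟨hxK, hxK'⟩
    exact ⟨(hg ▸ hxK).1, fun y hy =>
      add_le_add ((hg ▸ hxK).2 y hy) ((hg' ▸ hxK').2 y hy)⟩
  · rintro ⟨hxP, hmax⟩
    have hz := hmax z (hg ▸ hzK).1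
    have h1 : g x ≤ g z := (hg ▸ hzK).2 x hxP
    have h2 : g' x ≤ g' z := (hg' ▸ hzK').2 x hxP
    have hgx : g x = g z := by linarith
    have hgx' : g' x = g' z := by linarith
    constructor
    · rw [hg]
      exact ⟨hxP, fun y hy => by have := (hg ▸ hzK).2 y hy; linarith⟩
    · rw [hg']
      exact ⟨hxP, fun y hy => by have := (hg' ▸ hzK').2 y hy; linarith⟩

lemma vectorSpan_le_ker {X : Set V} {l : V →ₗ[ℝ] ℝ} {c : ℝ} (h : ∀ x ∈ X, l x = c) :
    vectorSpan ℝ X ≤ LinearMap.ker l := by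
  rw [vectorSpan_def, Submodule.span_le]
  intro d hd
  obtain ⟨a, ha, b, hb, rfl⟩ := Set.mem_vsub.mp hd
  simp [LinearMap.mem_ker, vsub_eq_sub, map_sub, h a ha, h b hb]

lemma face_eq_of_adim_eq {K K' P : Set V} (hK : IsFaceOf K P) (hK' : IsFaceOf K' P)
    (hsub : K ⊆ K') (hne : K.Nonempty)
    (hfin : FiniteDimensional ℝ (vectorSpan ℝ K'))
    (hdim : adim K = adim K') : K = K' := by
  have hle : vectorSpan ℝ K ≤ vectorSpan ℝ K' := vectorSpan_mono ℝ hsub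
  have hspan : vectorSpan ℝ K = vectorSpan ℝ K' :=
    Submodule.eq_of_le_of_finrank_eq hle hdim
  obtain ⟨l, hKeq⟩ := hK
  obtain ⟨x₀, hx₀⟩ := hne
  apply Subset.antisymm hsub
  intro x hx
  have hdiff : x - x₀ ∈ vectorSpan ℝ K := by
    rw [hspan]
    simpa [vsub_eq_sub] using vsub_mem_vectorSpan ℝ hx (hsub hx₀)
  have hker : vectorSpan ℝ K ≤ LinearMap.ker l := by
    rw [vectorSpan_def, Submodule.span_le]
    intro d hd
    obtain ⟨a, ha, b, hb, rfl⟩ := Set.mem_vsub.mp hd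
    have hab : l a = l b := le_antisymm
      ((hKeq ▸ hb).2 a (hKeq ▸ ha).1) ((hKeq ▸ ha).2 b (hKeq ▸ hb).1)
    simp [LinearMap.mem_ker, vsub_eq_sub, map_sub, hab]
  have hlx : l x = l x₀ := by
    have := hker hdiff
    rw [LinearMap.mem_ker, map_sub] at this
    linarith
  rw [hKeq]
  exact ⟨faceOf_subset hK' hx, fun y hy => by
    have := (hKeq ▸ hx₀).2 y hy; rw [hlx]; exact this⟩

lemma adim_convexHull (X : Set V) : adim (convexHull ℝ X) = adim X := by
  have h : vectorSpan ℝ (convexHull ℝ X) = vectorSpan ℝ X := by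
    rw [← direction_affineSpan, affineSpan_convexHull, direction_affineSpan]
  unfold adim
  rw [h]

lemma vectorSpan_union_basept {X Y : Set V} {x₀ : V} (hx₀ : x₀ ∈ X) :
    vectorSpan ℝ (X ∪ Y) = vectorSpan ℝ X ⊔ Submodule.span ℝ ((· -ᵥ x₀) '' Y) := by
  rw [vectorSpan_eq_span_vsub_set_right ℝ (Set.mem_union_left Y hx₀),
      Set.image_union, Submodule.span_union,
      ← vectorSpan_eq_span_vsub_set_right ℝ hx₀]

lemma finrank_sup_span_singleton_le (W : Submodule ℝ V) [FiniteDimensional ℝ W] (d : V) :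
    Module.finrank ℝ ↥(W ⊔ Submodule.span ℝ ({d} : Set V)) ≤ Module.finrank ℝ W + 1 := by
  rcases eq_or_ne d 0 with rfl | hd
  · rw [Submodule.span_zero_singleton, sup_bot_eq]
    omega
  · have h1 : Module.finrank ℝ (Submodule.span ℝ ({d} : Set V)) = 1 := finrank_span_singleton hd
    have h2 := Submodule.finrank_sup_add_finrank_inf_eq W (Submodule.span ℝ ({d} : Set V))
    omega

lemma finrank_sup_span_singleton_eq (W : Submodule ℝ V) [FiniteDimensional ℝ W] {d : V}
    (hd : d ∉ W) : Module.finrank ℝ ↥(W ⊔ Submodule.span ℝ ({d} : Set V)) = Module.finrank ℝ W + 1 := by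
  have hdne : d ≠ 0 := fun h => hd (h ▸ W.zero_mem)
  have h1 : Module.finrank ℝ (Submodule.span ℝ ({d} : Set V)) = 1 := finrank_span_singleton hdne
  have hinf : W ⊓ Submodule.span ℝ ({d} : Set V) = ⊥ := by
    rw [eq_bot_iff]
    intro x hx
    obtain ⟨hxW, hxD⟩ := Submodule.mem_inf.mp hx
    obtain ⟨r, rfl⟩ := Submodule.mem_span_singleton.mp hxD
    rcases eq_or_ne r 0 with rfl | hr
    · simp
    · exact absurd (by simpa [smul_smul, inv_mul_cancel₀ hr] using W.smul_mem r⁻¹ hxW) hd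
  have h2 := Submodule.finrank_sup_add_finrank_inf_eq W (Submodule.span ℝ ({d} : Set V))
  rw [hinf, finrank_bot] at h2
  omega

end OPSProof

end OPSHelpers
section OPSMain

open Set

namespace OPSProof

open scoped Classical

variable {V : Type*} [AddCommGroup V] [Module ℝ V]

/-- Bundled context for a one-point suspension. -/
structure Ctx (V : Type*) [AddCommGroup V] [Module ℝ V] where
  Q : Set V
  S : Set V
  l : V →ₗ[ℝ] ℝ
  c : ℝ
  v : V
  u : V
  w : V
  hS : S.Finite
  hQS : Q = convexHull ℝ S
  hl : ∀ x ∈ Q, l x = c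
  hvQ : v ∈ Q
  hlu : l u ≠ c
  hlw : l w ≠ c
  hseg : v ∈ openSegment ℝ u w

namespace Ctx

variable (C : Ctx V)

/-- The one-point suspension. -/
def Qt : Set V := convexHull ℝ (C.S ∪ {C.u, C.w})

/-- Swapping the two apices. -/
def swap : Ctx V where
  Q := C.Q; S := C.S; l := C.l; c := C.c; v := C.v; u := C.w; w := C.u
  hS := C.hS; hQS := C.hQS; hl := C.hl; hvQ := C.hvQ
  hlu := C.hlw; hlw := C.hlu
  hseg := by rw [openSegment_symm]; exact C.hseg

@[simp] lemma swap_Q : C.swap.Q = C.Q := rfl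
@[simp] lemma swap_S : C.swap.S = C.S := rfl
@[simp] lemma swap_u : C.swap.u = C.w := rfl
@[simp] lemma swap_w : C.swap.w = C.u := rfl
@[simp] lemma swap_v : C.swap.v = C.v := rfl

@[simp] lemma swap_Qt : C.swap.Qt = C.Qt := by
  unfold Qt
  rw [swap_S, swap_u, swap_w, Set.pair_comm]

lemma hSne : C.S.Nonempty := by
  have : C.Q.Nonempty := ⟨C.v, C.hvQ⟩
  rw [C.hQS, convexHull_nonempty_iff] at this
  exact this

lemma hQne : C.Q.Nonempty := ⟨C.v, C.hvQ⟩

lemma hQconv : Convex ℝ C.Q := C.hQS ▸ convex_convexHull ℝ C.S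

lemma hQtconv : Convex ℝ C.Qt := convex_convexHull ℝ _

lemma hSQ : C.S ⊆ C.Q := C.hQS ▸ subset_convexHull ℝ C.S

lemma hGenFin : (C.S ∪ {C.u, C.w}).Finite :=
  C.hS.union ((Set.finite_singleton C.w).insert C.u)

lemma hQQt : C.Q ⊆ C.Qt := by
  rw [C.hQS]
  exact convexHull_mono subset_union_left

lemma huQt : C.u ∈ C.Qt :=
  subset_convexHull ℝ _ (Set.mem_union_right _ (Set.mem_insert _ _))

lemma hwQt : C.w ∈ C.Qt :=
  subset_convexHull ℝ _ (Set.mem_union_right _ (Set.mem_insert_of_mem _ rfl))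

lemma hQtne : C.Qt.Nonempty := ⟨C.u, C.huQt⟩

lemma hlv : C.l C.v = C.c := C.hl _ C.hvQ

lemma vcomb : ∃ α β : ℝ, 0 < α ∧ 0 < β ∧ α + β = 1 ∧ α • C.u + β • C.w = C.v := C.hseg

lemma u_ne_w : C.u ≠ C.w := by
  intro h
  have := C.hseg
  rw [h, openSegment_same] at this
  rw [Set.mem_singleton_iff] at this
  exact C.hlw (this ▸ C.hlv)

lemma huQ : C.u ∉ C.Q := fun h => C.hlu (C.hl _ h)

lemma hwQ : C.w ∉ C.Q := fun h => C.hlw (C.hl _ h)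

lemma Qt_eq_hullQ : convexHull ℝ (C.Q ∪ {C.u, C.w}) = C.Qt := by
  rw [C.hQS, convexHull_convexHull_union_left]
  rfl

/-- `w - v` is in the span of `u - v`. -/
lemma w_sub_v_mem : C.w - C.v ∈ Submodule.span ℝ ({C.u - C.v} : Set V) := by
  obtain ⟨α, β, hα, hβ, hαβ, hcomb⟩ := C.vcomb
  rw [Submodule.mem_span_singleton]
  have hβ0 : β ≠ 0 := ne_of_gt hβ
  have h2 : β • C.w = C.v - α • C.u := by rw [← hcomb]; abel
  have key : β • (C.w - C.v) = (-α) • (C.u - C.v) := by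
    rw [smul_sub, h2, neg_smul, smul_sub]
    have h3 : (1 - β) • C.v = α • C.v := by rw [show (1:ℝ) - β = α by linarith]
    calc C.v - α • C.u - β • C.v = (1 - β) • C.v - α • C.u := by
          rw [sub_smul, one_smul]; abel
      _ = α • C.v - α • C.u := by rw [h3]
      _ = -(α • C.u - α • C.v) := by abel
  refine ⟨β⁻¹ * (-α), ?_⟩
  calc (β⁻¹ * (-α)) • (C.u - C.v) = β⁻¹ • ((-α) • (C.u - C.v)) := by rw [smul_smul]
    _ = β⁻¹ • (β • (C.w - C.v)) := by rw [key]
    _ = C.w - C.v := by rw [smul_smul, inv_mul_cancel₀ hβ0, one_smul]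

lemma finQ : FiniteDimensional ℝ (vectorSpan ℝ C.Q) := by
  have h : vectorSpan ℝ C.Q = vectorSpan ℝ C.S := by
    rw [C.hQS, ← direction_affineSpan, affineSpan_convexHull, direction_affineSpan]
  rw [h]
  exact finiteDimensional_vectorSpan_of_finite ℝ C.hS

lemma finQt : FiniteDimensional ℝ (vectorSpan ℝ C.Qt) := by
  have h : vectorSpan ℝ C.Qt = vectorSpan ℝ (C.S ∪ {C.u, C.w}) := by
    rw [Qt, ← direction_affineSpan, affineSpan_convexHull, direction_affineSpan]
  rw [h]
  exact finiteDimensional_vectorSpan_of_finite ℝ C.hGenFin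

lemma finOf {X : Set V} (h : X ⊆ C.Qt) : FiniteDimensional ℝ (vectorSpan ℝ X) := by
  have := C.finQt
  exact Submodule.finiteDimensional_of_le (vectorSpan_mono ℝ h)

end Ctx

end OPSProof

end OPSMain
section OPSDim

open Set

namespace OPSProof

variable {V : Type*} [AddCommGroup V] [Module ℝ V]

lemma vectorSpan_le_of_basept {X : Set V} {W : Submodule ℝ V} {p : V}
    (h : ∀ x ∈ X, x - p ∈ W) : vectorSpan ℝ X ≤ W := by
  rw [vectorSpan_def, Submodule.span_le]
  intro dd hdd
  obtain ⟨a, ha, b, hb, rfl⟩ := Set.mem_vsub.mp hdd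
  have hab : a -ᵥ b = (a - p) - (b - p) := by rw [vsub_eq_sub]; abel
  rw [hab]
  exact W.sub_mem (h a ha) (h b hb)

lemma vectorSpan_convexHull (X : Set V) :
    vectorSpan ℝ (convexHull ℝ X) = vectorSpan ℝ X := by
  rw [← direction_affineSpan, affineSpan_convexHull, direction_affineSpan]

lemma adim_union_singleton {X : Set V} {t x₀ : V} (hx₀ : x₀ ∈ X)
    (hfin : FiniteDimensional ℝ (vectorSpan ℝ X))
    (hd : t - x₀ ∉ vectorSpan ℝ X) :
    adim (X ∪ {t}) = adim X + 1 := by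
  haveI := hfin
  unfold adim
  rw [vectorSpan_union_basept hx₀]
  have himg : ((· -ᵥ x₀) '' ({t} : Set V)) = {t - x₀} := by
    simp [vsub_eq_sub]
  rw [himg]
  exact finrank_sup_span_singleton_eq _ hd

lemma adim_union_pair {X : Set V} {t t' x₀ : V} (hx₀ : x₀ ∈ X)
    (hfin : FiniteDimensional ℝ (vectorSpan ℝ X))
    (ht' : t' - x₀ ∈ Submodule.span ℝ ({t - x₀} : Set V))
    (hd : t - x₀ ∉ vectorSpan ℝ X) :
    adim (X ∪ {t, t'}) = adim X + 1 := by
  haveI := hfin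
  unfold adim
  rw [vectorSpan_union_basept hx₀]
  have himg : ((· -ᵥ x₀) '' ({t, t'} : Set V)) = {t - x₀, t' - x₀} := by
    simp only [vsub_eq_sub, Set.image_pair]
  rw [himg]
  have hspan : Submodule.span ℝ ({t - x₀, t' - x₀} : Set V)
      = Submodule.span ℝ ({t - x₀} : Set V) := by
    apply le_antisymm
    · rw [Submodule.span_le]
      rintro d (rfl | rfl)
      · exact Submodule.mem_span_singleton_self _
      · exact ht'
    · exact Submodule.span_mono (by simp)
  rw [hspan]
  exact finrank_sup_span_singleton_eq _ hd

namespace Ctx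

variable (C : Ctx V)

lemma apex_sub_notmem {X : Set V} {x₀ : V} (hX : ∀ x ∈ X, C.l x = C.c)
    {t : V} (ht : C.l t ≠ C.c) (hx₀ : x₀ ∈ X) : t - x₀ ∉ vectorSpan ℝ X := by
  intro h
  have hmem := vectorSpan_le_ker hX h
  rw [LinearMap.mem_ker, map_sub, hX x₀ hx₀] at hmem
  exact ht (by linarith)

lemma adimQt : adim C.Qt = adim C.Q + 1 := by
  have h1 : adim C.Qt = adim (C.Q ∪ {C.u, C.w}) := by
    rw [← C.Qt_eq_hullQ, adim_convexHull]
  rw [h1]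
  exact adim_union_pair C.hvQ C.finQ C.w_sub_v_mem
    (C.apex_sub_notmem C.hl C.hlu C.hvQ)

lemma argmax_face {g : V →ₗ[ℝ] ℝ} {M : ℝ}
    (hb : ∀ y ∈ C.Qt, g y ≤ M) (hatt : ∃ x ∈ C.Qt, g x = M) :
    IsFaceOf {x ∈ C.Qt | g x = M} C.Qt := by
  refine ⟨g, ?_⟩
  obtain ⟨x₀, hx₀, hgx₀⟩ := hatt
  ext x
  simp only [mem_setOf_eq]
  constructor
  · rintro ⟨hxQt, hgx⟩
    exact ⟨hxQt, fun y hy => (hb y hy).trans hgx.ge⟩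
  · rintro ⟨hxQt, hmax⟩
    exact ⟨hxQt, le_antisymm (hb x hxQt) (hgx₀ ▸ hmax x₀ hx₀)⟩

lemma face_hull {K : Set V} (hK : IsFaceOf K C.Qt) :
    K = convexHull ℝ ((C.S ∪ {C.u, C.w}) ∩ K) :=
  face_eq_convexHull_inter C.hGenFin hK

lemma face_nonempty_Qt {K : Set V} (hK : IsFaceOf K C.Qt) : K.Nonempty :=
  face_nonempty C.hGenFin C.hQtne hK

/-- Slicing a face of `Qt` containing `u` but not `w`. -/
lemma face_slice_u {K : Set V} (hK : IsFaceOf K C.Qt)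
    (hd : 1 ≤ adim K) (hu : C.u ∈ K) (hw : C.w ∉ K) :
    (K ∩ C.Q).Nonempty ∧ IsFaceOf (K ∩ C.Q) C.Q ∧ adim (K ∩ C.Q) + 1 = adim K := by
  have hKQt : K ⊆ C.Qt := faceOf_subset hK
  have hhull := C.face_hull hK
  have hgen : (C.S ∪ {C.u, C.w}) ∩ K = (C.S ∩ K) ∪ {C.u} := by
    ext x
    constructor
    · rintro ⟨hx1 | hx2, hxK⟩
      · exact Or.inl ⟨hx1, hxK⟩
      · rcases hx2 with rfl | rfl
        · exact Or.inr rfl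
        · exact absurd hxK hw
    · rintro (⟨hxS, hxK⟩ | rfl)
      · exact ⟨Or.inl hxS, hxK⟩
      · exact ⟨Or.inr (mem_insert _ _), hu⟩
  rw [hgen] at hhull
  have hSK : (C.S ∩ K).Nonempty := by
    by_contra hempty
    rw [not_nonempty_iff_eq_empty] at hempty
    rw [hempty, Set.empty_union, convexHull_singleton] at hhull
    rw [hhull] at hd
    unfold adim at hd
    rw [vectorSpan_singleton, finrank_bot] at hd
    omega
  obtain ⟨x₀, hx₀S, hx₀K⟩ := hSK
  have hx₀Q : x₀ ∈ C.Q := C.hSQ hx₀S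
  have hne : (K ∩ C.Q).Nonempty := ⟨x₀, hx₀K, hx₀Q⟩
  refine ⟨hne, face_inter_set hK C.hQQt hne, ?_⟩
  haveI hfinK := C.finOf hKQt
  haveI hfinKQ := C.finOf (fun x (hx : x ∈ K ∩ C.Q) => hKQt hx.1)
  have hmemK : C.u - x₀ ∈ vectorSpan ℝ K := by
    simpa [vsub_eq_sub] using vsub_mem_vectorSpan ℝ hu hx₀K
  have hnotmem : C.u - x₀ ∉ vectorSpan ℝ (K ∩ C.Q) :=
    C.apex_sub_notmem (fun x hx => C.hl x hx.2) C.hlu ⟨hx₀K, hx₀Q⟩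
  have hlt : adim (K ∩ C.Q) < adim K := by
    have hltsub : vectorSpan ℝ (K ∩ C.Q) < vectorSpan ℝ K :=
      lt_of_le_of_ne (vectorSpan_mono ℝ inter_subset_left)
        (fun heq => hnotmem (heq ▸ hmemK))
    exact Submodule.finrank_lt_finrank_of_lt hltsub
  have hupper : adim K ≤ adim (K ∩ C.Q) + 1 := by
    set W := vectorSpan ℝ (K ∩ C.Q) ⊔ Submodule.span ℝ ({C.u - x₀} : Set V) with hW
    have hVK : vectorSpan ℝ K ≤ W := by
      conv_lhs => rw [hhull]
      rw [vectorSpan_convexHull]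
      apply vectorSpan_le_of_basept
      rintro x (⟨hxS, hxK⟩ | rfl)
      · exact Submodule.mem_sup_left (by
          simpa [vsub_eq_sub] using
            vsub_mem_vectorSpan ℝ (Set.mem_inter hxK (C.hSQ hxS)) ⟨hx₀K, hx₀Q⟩)
      · exact Submodule.mem_sup_right (Submodule.mem_span_singleton_self _)
    calc adim K ≤ Module.finrank ℝ ↥W := Submodule.finrank_mono hVK
      _ ≤ adim (K ∩ C.Q) + 1 := finrank_sup_span_singleton_le _ _
  omega

/-- Slicing a face of `Qt` containing both `u` and `w`. -/
lemma face_slice_uw {K : Set V} (hK : IsFaceOf K C.Qt)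
    (hu : C.u ∈ K) (hw : C.w ∈ K) :
    (K ∩ C.Q).Nonempty ∧ IsFaceOf (K ∩ C.Q) C.Q ∧ adim (K ∩ C.Q) + 1 = adim K := by
  have hKQt : K ⊆ C.Qt := faceOf_subset hK
  have hKconv : Convex ℝ K := faceOf_convex C.hQtconv hK
  have hvK : C.v ∈ K :=
    (openSegment_subset_segment ℝ C.u C.w).trans (hKconv.segment_subset hu hw) C.hseg
  have hne : (K ∩ C.Q).Nonempty := ⟨C.v, hvK, C.hvQ⟩
  refine ⟨hne, face_inter_set hK C.hQQt hne, ?_⟩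
  haveI hfinK := C.finOf hKQt
  haveI hfinKQ := C.finOf (fun x (hx : x ∈ K ∩ C.Q) => hKQt hx.1)
  have hmemK : C.u - C.v ∈ vectorSpan ℝ K := by
    simpa [vsub_eq_sub] using vsub_mem_vectorSpan ℝ hu hvK
  have hnotmem : C.u - C.v ∉ vectorSpan ℝ (K ∩ C.Q) :=
    C.apex_sub_notmem (fun x hx => C.hl x hx.2) C.hlu ⟨hvK, C.hvQ⟩
  have hlt : adim (K ∩ C.Q) < adim K := by
    have hltsub : vectorSpan ℝ (K ∩ C.Q) < vectorSpan ℝ K :=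
      lt_of_le_of_ne (vectorSpan_mono ℝ inter_subset_left)
        (fun heq => hnotmem (heq ▸ hmemK))
    exact Submodule.finrank_lt_finrank_of_lt hltsub
  have hupper : adim K ≤ adim (K ∩ C.Q) + 1 := by
    have hhull := C.face_hull hK
    set W := vectorSpan ℝ (K ∩ C.Q) ⊔ Submodule.span ℝ ({C.u - C.v} : Set V) with hW
    have hVK : vectorSpan ℝ K ≤ W := by
      conv_lhs => rw [hhull]
      rw [vectorSpan_convexHull]
      apply vectorSpan_le_of_basept
      rintro x ⟨hx1 | hx2, hxK⟩
      · exact Submodule.mem_sup_left (by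
          simpa [vsub_eq_sub] using
            vsub_mem_vectorSpan ℝ (Set.mem_inter hxK (C.hSQ hx1)) ⟨hvK, C.hvQ⟩)
      · rcases hx2 with rfl | rfl
        · exact Submodule.mem_sup_right (Submodule.mem_span_singleton_self _)
        · exact Submodule.mem_sup_right C.w_sub_v_mem
    calc adim K ≤ Module.finrank ℝ ↥W := Submodule.finrank_mono hVK
      _ ≤ adim (K ∩ C.Q) + 1 := finrank_sup_span_singleton_le _ _
  omega

/-- Slicing any face of `Qt` of positive dimension. -/
lemma face_slice {K : Set V} (hK : IsFaceOf K C.Qt) (hd : 1 ≤ adim K) :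
    (K ∩ C.Q).Nonempty ∧ IsFaceOf (K ∩ C.Q) C.Q ∧
      (K ⊆ C.Q ∨ adim (K ∩ C.Q) + 1 = adim K) := by
  by_cases hu : C.u ∈ K <;> by_cases hw : C.w ∈ K
  · obtain ⟨h1, h2, h3⟩ := C.face_slice_uw hK hu hw
    exact ⟨h1, h2, Or.inr h3⟩
  · obtain ⟨h1, h2, h3⟩ := C.face_slice_u hK hd hu hw
    exact ⟨h1, h2, Or.inr h3⟩
  · have hK' : IsFaceOf K C.swap.Qt := by rw [C.swap_Qt]; exact hK
    obtain ⟨h1, h2, h3⟩ := C.swap.face_slice_u hK' hd hw hu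
    exact ⟨h1, h2, Or.inr h3⟩
  · have hhull := C.face_hull hK
    have hgen : (C.S ∪ {C.u, C.w}) ∩ K = C.S ∩ K := by
      ext x
      constructor
      · rintro ⟨hx1 | hx2, hxK⟩
        · exact ⟨hx1, hxK⟩
        · rcases hx2 with rfl | rfl
          · exact absurd hxK hu
          · exact absurd hxK hw
      · rintro ⟨hxS, hxK⟩
        exact ⟨Or.inl hxS, hxK⟩
    rw [hgen] at hhull
    have hKQ : K ⊆ C.Q := by
      rw [hhull, C.hQS]
      exact convexHull_mono (fun x hx => hx.1)
    obtain ⟨x, hx⟩ := C.face_nonempty_Qt hK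
    have hne : (K ∩ C.Q).Nonempty := ⟨x, hx, hKQ hx⟩
    exact ⟨hne, face_inter_set hK C.hQQt hne, Or.inl hKQ⟩

end Ctx

end OPSProof

end OPSDim
section OPSProject

open Set

namespace OPSProof

variable {V : Type*} [AddCommGroup V] [Module ℝ V]

namespace Ctx

variable (C : Ctx V)

lemma Q_not_face_Qt : ¬ IsFaceOf C.Q C.Qt := by
  rintro ⟨g, hg⟩
  have hv' : C.v ∈ {x ∈ C.Qt | ∀ y ∈ C.Qt, g y ≤ g x} := hg ▸ C.hvQ
  obtain ⟨hvQt, hmax⟩ := hv'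
  obtain ⟨α, β, hα, hβ, hαβ, hcomb⟩ := C.vcomb
  have hgu : g C.u ≤ g C.v := hmax _ C.huQt
  have hgw : g C.w ≤ g C.v := hmax _ C.hwQt
  have hgv : g C.v = α * g C.u + β * g C.w := by
    rw [← hcomb]; simp [map_add, map_smul, smul_eq_mul]
  have key : α * (g C.v - g C.u) = β * (g C.w - g C.v) := by
    linear_combination hgv + g C.v * hαβ
  have h4 : α * (g C.v - g C.u) ≤ 0 := by
    rw [key]
    nlinarith [mul_nonneg hβ.le (sub_nonneg.mpr hgw)]
  have h6 : α * (g C.v - g C.u) = 0 :=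
    le_antisymm h4 (mul_nonneg hα.le (sub_nonneg.mpr hgu))
  have hgueq : g C.u = g C.v := by
    rcases mul_eq_zero.mp h6 with hcase | hcase
    · exact absurd hcase (ne_of_gt hα)
    · linarith
  have huQ : C.u ∈ C.Q := by
    rw [hg]
    exact ⟨C.huQt, fun y hy => (hmax y hy).trans hgueq.ge⟩
  exact C.hlu (C.hl _ huQ)

lemma facet_slice (h2 : 2 ≤ adim C.Q) {G : Set V} (hG : IsFacetOf G C.Qt) :
    IsFacetOf (G ∩ C.Q) C.Q := by
  obtain ⟨hGf, hGdim⟩ := hG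
  have hQt := C.adimQt
  have hadimG : adim G = adim C.Q := by omega
  obtain ⟨hne, hface, hcases⟩ := C.face_slice hGf (by omega)
  rcases hcases with hsub | hdim
  · exfalso
    have hGQ : IsFaceOf G C.Q :=
      face_of_face_subset hGf C.hQQt hsub (C.face_nonempty_Qt hGf)
    have hGeq : G = C.Q := face_eq_of_adim_eq hGQ (faceOf_self C.Q)
      (faceOf_subset hGQ) (C.face_nonempty_Qt hGf) C.finQ (by rw [hadimG])
    exact C.Q_not_face_Qt (hGeq ▸ hGf)
  · exact ⟨hface, by omega⟩

lemma ridge_slice (h2 : 2 ≤ adim C.Q) {R : Set V} (hR : IsRidgeOf R C.Qt) :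
    (R ⊆ C.Q ∧ IsFaceOf R C.Q ∧ adim R + 1 = adim C.Q) ∨ IsRidgeOf (R ∩ C.Q) C.Q := by
  obtain ⟨hRf, hRdim⟩ := hR
  have hQt := C.adimQt
  have hadimR : adim R + 1 = adim C.Q := by omega
  obtain ⟨hne, hface, hcases⟩ := C.face_slice hRf (by omega)
  rcases hcases with hsub | hdim
  · exact Or.inl ⟨hsub,
      face_of_face_subset hRf C.hQQt hsub (C.face_nonempty_Qt hRf), hadimR⟩
  · exact Or.inr ⟨hface, by omega⟩

lemma edge_project (h2 : 2 ≤ adim C.Q) {G G' : Set V}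
    (h : (dualGraph C.Qt).Adj G G') :
    G ∩ C.Q = G' ∩ C.Q ∨ (dualGraph C.Q).Adj (G ∩ C.Q) (G' ∩ C.Q) := by
  obtain ⟨hGne, hG, hG', hR⟩ := h
  have hpG := C.facet_slice h2 hG
  have hpG' := C.facet_slice h2 hG'
  have hinter : (G ∩ C.Q) ∩ (G' ∩ C.Q) = (G ∩ G') ∩ C.Q := by
    ext x
    constructor
    · rintro ⟨⟨ha, hb⟩, hc, -⟩
      exact ⟨⟨ha, hc⟩, hb⟩
    · rintro ⟨⟨ha, hc⟩, hb⟩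
      exact ⟨⟨ha, hb⟩, hc, hb⟩
  have hRne : (G ∩ G').Nonempty := C.face_nonempty_Qt hR.1
  rcases C.ridge_slice h2 hR with ⟨hsub, hface, hdim⟩ | hridge
  · left
    have e1 : G ∩ G' = G ∩ C.Q :=
      face_eq_of_adim_eq hface hpG.1
        (fun x hx => ⟨hx.1, hsub hx⟩) hRne
        (C.finOf (fun x hx => C.hQQt hx.2))
        (by have := hpG.2; omega)
    have e2 : G ∩ G' = G' ∩ C.Q :=
      face_eq_of_adim_eq hface hpG'.1
        (fun x hx => ⟨hx.2, hsub hx⟩) hRne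
        (C.finOf (fun x hx => C.hQQt hx.2))
        (by have := hpG'.2; omega)
    rw [← e1, ← e2]
  · right
    refine ⟨?_, hpG, hpG', by rwa [hinter]⟩
    intro heq
    have hGQeq : G ∩ C.Q = (G ∩ G') ∩ C.Q := by
      rw [← hinter, ← heq, inter_self]
    have hd1 := hpG.2
    have hd2 := hridge.2
    rw [hGQeq] at hd1
    omega

lemma walk_project (h2 : 2 ≤ adim C.Q) {A B : Set V}
    (W : (dualGraph C.Qt).Walk A B) :
    ∃ p : (dualGraph C.Q).Walk (A ∩ C.Q) (B ∩ C.Q), p.length ≤ W.length := by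
  induction W with
  | nil => exact ⟨SimpleGraph.Walk.nil, le_rfl⟩
  | cons h p ih =>
    obtain ⟨q, hq⟩ := ih
    rcases C.edge_project h2 h with heq | hadj
    · refine ⟨q.copy heq.symm rfl, ?_⟩
      rw [SimpleGraph.Walk.length_copy, SimpleGraph.Walk.length_cons]
      omega
    · refine ⟨SimpleGraph.Walk.cons hadj q, ?_⟩
      rw [SimpleGraph.Walk.length_cons, SimpleGraph.Walk.length_cons]
      omega

end Ctx

end OPSProof

end OPSProject
section OPSLift

open Set

namespace OPSProof

open scoped Classical

variable {V : Type*} [AddCommGroup V] [Module ℝ V]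

namespace Ctx

variable (C : Ctx V)

lemma face_nonempty_Q {K : Set V} (hK : IsFaceOf K C.Q) : K.Nonempty :=
  face_nonempty C.hS (by rw [← C.hQS]; exact C.hQne) (C.hQS ▸ hK)

lemma face_hull_Q {K : Set V} (hK : IsFaceOf K C.Q) :
    K = convexHull ℝ (C.S ∩ K) :=
  face_eq_convexHull_inter C.hS (C.hQS ▸ hK)

/-- Core construction of the supporting functional for a lift. -/
lemma lift_core {F : Set V} (hF : IsFaceOf F C.Q) (hne : F.Nonempty) :
    ∃ (g : V →ₗ[ℝ] ℝ) (M : ℝ),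
      (∀ y ∈ C.Qt, g y ≤ M) ∧ (∀ x ∈ C.Q, (g x = M ↔ x ∈ F)) ∧
      g C.u = M ∧ (C.v ∈ F → g C.w = M) ∧ (C.v ∉ F → g C.w < M) := by
  obtain ⟨f, hFeq⟩ := hF
  obtain ⟨x₀, hx₀⟩ := hne
  obtain ⟨hx₀Q, hx₀max⟩ := (hFeq ▸ hx₀ : x₀ ∈ {x ∈ C.Q | ∀ y ∈ C.Q, f y ≤ f x})
  set m := f x₀ with hm
  set β := (m - f C.u) / (C.l C.u - C.c) with hβ
  refine ⟨f + β • C.l, m + β * C.c, ?_⟩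
  set g := f + β • C.l with hgdef
  set M := m + β * C.c with hM
  have happ : ∀ x, g x = f x + β * C.l x := fun x => by
    simp [hgdef, smul_eq_mul]
  have hQval : ∀ x ∈ C.Q, g x = f x + β * C.c := fun x hx => by
    rw [happ, C.hl x hx]
  have hchar : ∀ x ∈ C.Q, (g x = M ↔ x ∈ F) := by
    intro x hx
    rw [hQval x hx]
    constructor
    · intro h
      have hfx : f x = m := by rw [hM] at h; linarith
      rw [hFeq]
      exact ⟨hx, fun y hy => by rw [hfx]; exact hx₀max y hy⟩
    · intro hxF
      have hfx : f x = m :=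
        le_antisymm (hx₀max x hx) ((hFeq ▸ hxF).2 x₀ hx₀Q)
      rw [hfx, hM]
  have hgu : g C.u = M := by
    rw [happ]
    have hlune : C.l C.u - C.c ≠ 0 := sub_ne_zero.mpr C.hlu
    rw [hM, hβ]
    field_simp
    ring
  have hgvle : g C.v ≤ M := by
    rw [hQval _ C.hvQ, hM]
    have := hx₀max _ C.hvQ
    linarith
  obtain ⟨α, β', hα, hβ', hαβ', hcomb⟩ := C.vcomb
  have hgveq : g C.v = α * g C.u + β' * g C.w := by
    rw [← hcomb]; simp [map_add, map_smul, smul_eq_mul]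
  have hk : g C.v - M = β' * (g C.w - M) := by
    rw [hgveq, hgu]
    linear_combination M * hαβ'
  have hwin : C.v ∈ F → g C.w = M := by
    intro hv
    have hgv : g C.v = M := (hchar _ C.hvQ).mpr hv
    rw [hgv] at hk
    have : β' * (g C.w - M) = 0 := by linarith
    rcases mul_eq_zero.mp this with hc | hc
    · exact absurd hc (ne_of_gt hβ')
    · linarith
  have hwout : C.v ∉ F → g C.w < M := by
    intro hv
    have hgv : g C.v ≠ M := fun hc => hv ((hchar _ C.hvQ).mp hc)
    have hgvlt : g C.v < M := lt_of_le_of_ne hgvle hgv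
    nlinarith
  have hgwle : g C.w ≤ M := by
    by_cases hv : C.v ∈ F
    · exact (hwin hv).le
    · exact (hwout hv).le
  have hbound : ∀ y ∈ C.Qt, g y ≤ M := by
    have hgen : C.S ∪ {C.u, C.w} ⊆ {y | g y ≤ M} := by
      rintro y (hyS | hy2)
      · have hyQ := C.hSQ hyS
        show g y ≤ M
        rw [hQval y hyQ, hM]
        have := hx₀max y hyQ
        linarith
      · rcases hy2 with rfl | rfl
        · exact hgu.le
        · exact hgwle
    have hsub : C.Qt ⊆ {y | g y ≤ M} :=
      convexHull_min hgen (convex_halfSpace_le (LinearMap.isLinear g) M)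
    exact fun y hy => hsub hy
  exact ⟨hbound, hchar, hgu, hwin, hwout⟩

lemma lift_hull_single {F : Set V} {g : V →ₗ[ℝ] ℝ} {M : ℝ}
    (hFQ : F ⊆ C.Q)
    (hb : ∀ y ∈ C.Qt, g y ≤ M) (hchar : ∀ x ∈ C.Q, (g x = M ↔ x ∈ F))
    (hgu : g C.u = M) (hgw : g C.w < M) :
    convexHull ℝ (F ∪ {C.u}) = {x ∈ C.Qt | g x = M} := by
  apply Subset.antisymm
  · have hsub : F ∪ {C.u} ⊆ {x ∈ C.Qt | g x = M} := by
      rintro x (hxF | rfl)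
      · exact ⟨C.hQQt (hFQ hxF), (hchar x (hFQ hxF)).mpr hxF⟩
      · exact ⟨C.huQt, hgu⟩
    have hconv : Convex ℝ {x ∈ C.Qt | g x = M} := by
      have heq : {x ∈ C.Qt | g x = M} = C.Qt ∩ {x | M ≤ g x} := by
        ext x
        simp only [mem_setOf_eq, mem_inter_iff]
        exact ⟨fun ⟨h1, h2⟩ => ⟨h1, h2.ge⟩,
          fun ⟨h1, h2⟩ => ⟨h1, le_antisymm (hb x h1) h2⟩⟩
      rw [heq]
      exact C.hQtconv.inter (convex_halfSpace_ge (LinearMap.isLinear g) M)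
    exact convexHull_min hsub hconv
  · have hatt : ∃ x ∈ C.Qt, g x = M := ⟨C.u, C.huQt, hgu⟩
    have hhull := face_eq_convexHull_inter C.hGenFin (C.argmax_face hb hatt)
    intro x hx
    rw [hhull] at hx
    refine convexHull_mono ?_ hx
    rintro y ⟨hygen, hyQt, hgy⟩
    rcases hygen with hyS | hy2
    · exact Or.inl ((hchar y (C.hSQ hyS)).mp hgy)
    · rcases hy2 with rfl | rfl
      · exact Or.inr rfl
      · exact absurd hgy (ne_of_lt hgw)

lemma lift_hull_double {F : Set V} {g : V →ₗ[ℝ] ℝ} {M : ℝ}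
    (hFQ : F ⊆ C.Q)
    (hb : ∀ y ∈ C.Qt, g y ≤ M) (hchar : ∀ x ∈ C.Q, (g x = M ↔ x ∈ F))
    (hgu : g C.u = M) (hgw : g C.w = M) :
    convexHull ℝ (F ∪ {C.u, C.w}) = {x ∈ C.Qt | g x = M} := by
  apply Subset.antisymm
  · have hsub : F ∪ {C.u, C.w} ⊆ {x ∈ C.Qt | g x = M} := by
      rintro x (hxF | hx2)
      · exact ⟨C.hQQt (hFQ hxF), (hchar x (hFQ hxF)).mpr hxF⟩
      · rcases hx2 with rfl | rfl
        · exact ⟨C.huQt, hgu⟩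
        · exact ⟨C.hwQt, hgw⟩
    have hconv : Convex ℝ {x ∈ C.Qt | g x = M} := by
      have heq : {x ∈ C.Qt | g x = M} = C.Qt ∩ {x | M ≤ g x} := by
        ext x
        simp only [mem_setOf_eq, mem_inter_iff]
        exact ⟨fun ⟨h1, h2⟩ => ⟨h1, h2.ge⟩,
          fun ⟨h1, h2⟩ => ⟨h1, le_antisymm (hb x h1) h2⟩⟩
      rw [heq]
      exact C.hQtconv.inter (convex_halfSpace_ge (LinearMap.isLinear g) M)
    exact convexHull_min hsub hconv
  · have hatt : ∃ x ∈ C.Qt, g x = M := ⟨C.u, C.huQt, hgu⟩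
    have hhull := face_eq_convexHull_inter C.hGenFin (C.argmax_face hb hatt)
    intro x hx
    rw [hhull] at hx
    refine convexHull_mono ?_ hx
    rintro y ⟨hygen, hyQt, hgy⟩
    rcases hygen with hyS | hy2
    · exact Or.inl ((hchar y (C.hSQ hyS)).mp hgy)
    · exact Or.inr hy2

/-- The canonical lift of a facet. -/
def lift (F : Set V) : Set V :=
  if C.v ∈ F then convexHull ℝ (F ∪ {C.u, C.w}) else convexHull ℝ (F ∪ {C.u})

lemma lift_spec {F : Set V} (hF : IsFaceOf F C.Q) (hne : F.Nonempty) :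
    IsFaceOf (C.lift F) C.Qt ∧ adim (C.lift F) = adim F + 1 ∧
    ∃ (g : V →ₗ[ℝ] ℝ) (M : ℝ),
      (∀ y ∈ C.Qt, g y ≤ M) ∧ (∀ x ∈ C.Q, (g x = M ↔ x ∈ F)) ∧
      C.lift F = {x ∈ C.Qt | g x = M} ∧ g C.u = M ∧
      (C.v ∈ F → g C.w = M) ∧ (C.v ∉ F → g C.w < M) := by
  obtain ⟨g, M, hb, hchar, hgu, hwin, hwout⟩ := C.lift_core hF hne
  have hFQ : F ⊆ C.Q := faceOf_subset hF
  have hatt : ∃ x ∈ C.Qt, g x = M := ⟨C.u, C.huQt, hgu⟩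
  by_cases hv : C.v ∈ F
  · have hgw := hwin hv
    have hhull := C.lift_hull_double hFQ hb hchar hgu hgw
    have hlift : C.lift F = convexHull ℝ (F ∪ {C.u, C.w}) := if_pos hv
    refine ⟨?_, ?_, g, M, hb, hchar, by rw [hlift, hhull], hgu, hwin, hwout⟩
    · rw [hlift, hhull]
      exact C.argmax_face hb hatt
    · rw [hlift, adim_convexHull]
      exact adim_union_pair hv (C.finOf ((hFQ.trans C.hQQt)))
        C.w_sub_v_mem (C.apex_sub_notmem (fun x hx => C.hl x (hFQ hx)) C.hlu hv)
  · have hgw := hwout hv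
    have hhull := C.lift_hull_single hFQ hb hchar hgu hgw
    have hlift : C.lift F = convexHull ℝ (F ∪ {C.u}) := if_neg hv
    obtain ⟨x₀, hx₀⟩ := hne
    refine ⟨?_, ?_, g, M, hb, hchar, by rw [hlift, hhull], hgu, hwin, hwout⟩
    · rw [hlift, hhull]
      exact C.argmax_face hb hatt
    · rw [hlift, adim_convexHull]
      exact adim_union_singleton hx₀ (C.finOf ((hFQ.trans C.hQQt)))
        (C.apex_sub_notmem (fun x hx => C.hl x (hFQ hx)) C.hlu hx₀)

lemma lift_inter {F F' G G' : Set V} {g g' : V →ₗ[ℝ] ℝ} {M M' : ℝ}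
    (hb : ∀ y ∈ C.Qt, g y ≤ M) (hb' : ∀ y ∈ C.Qt, g' y ≤ M')
    (hchar : ∀ x ∈ C.Q, (g x = M ↔ x ∈ F)) (hchar' : ∀ x ∈ C.Q, (g' x = M' ↔ x ∈ F'))
    (hG : G = {x ∈ C.Qt | g x = M}) (hG' : G' = {x ∈ C.Qt | g' x = M'})
    (hcomm : ∃ x ∈ C.Qt, g x = M ∧ g' x = M')
    (hFF' : F ∩ F' = convexHull ℝ (C.S ∩ (F ∩ F'))) :
    IsFaceOf (G ∩ G') C.Qt ∧
      G ∩ G' = convexHull ℝ ((F ∩ F') ∪ ({C.u, C.w} ∩ (G ∩ G'))) := by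
  obtain ⟨z, hzQt, hzg, hzg'⟩ := hcomm
  have hGG' : G ∩ G' = {x ∈ C.Qt | (g + g') x = M + M'} := by
    rw [hG, hG']
    ext x
    simp only [mem_inter_iff, mem_setOf_eq, LinearMap.add_apply]
    constructor
    · rintro ⟨⟨h1, h2⟩, -, h3⟩
      exact ⟨h1, by rw [h2, h3]⟩
    · rintro ⟨h1, h2⟩
      have hb1 := hb x h1
      have hb2 := hb' x h1
      exact ⟨⟨h1, by linarith⟩, ⟨h1, by linarith⟩⟩
  have hbsum : ∀ y ∈ C.Qt, (g + g') y ≤ M + M' := fun y hy =>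
    add_le_add (hb y hy) (hb' y hy)
  have hatt : ∃ x ∈ C.Qt, (g + g') x = M + M' :=
    ⟨z, hzQt, by simp [hzg, hzg']⟩
  have hface : IsFaceOf (G ∩ G') C.Qt := by
    rw [hGG']
    exact C.argmax_face hbsum hatt
  refine ⟨hface, ?_⟩
  have hhull := C.face_hull hface
  have hgens : (C.S ∪ {C.u, C.w}) ∩ (G ∩ G')
      = (C.S ∩ (F ∩ F')) ∪ ({C.u, C.w} ∩ (G ∩ G')) := by
    ext x
    constructor
    · rintro ⟨hxS | hx2, hxGG⟩
      · have hxQ := C.hSQ hxS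
        exact Or.inl ⟨hxS, (hchar x hxQ).mp (hG ▸ hxGG.1).2,
          (hchar' x hxQ).mp (hG' ▸ hxGG.2).2⟩
      · exact Or.inr ⟨hx2, hxGG⟩
    · rintro (⟨hxS, hxF, hxF'⟩ | ⟨hx2, hxGG⟩)
      · have hxQ := C.hSQ hxS
        refine ⟨Or.inl hxS, ?_, ?_⟩
        · rw [hG]; exact ⟨C.hQQt hxQ, (hchar x hxQ).mpr hxF⟩
        · rw [hG']; exact ⟨C.hQQt hxQ, (hchar' x hxQ).mpr hxF'⟩
      · exact ⟨Or.inr hx2, hxGG⟩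
  conv_rhs => rw [hFF', convexHull_convexHull_union_left, ← hgens]
  exact hhull

lemma adim_hull_union_single {R : Set V} (hR : R ⊆ C.Q) (hRne : R.Nonempty)
    {t : V} (ht : C.l t ≠ C.c) :
    adim (convexHull ℝ (R ∪ {t})) = adim R + 1 := by
  obtain ⟨x₀, hx₀⟩ := hRne
  rw [adim_convexHull]
  exact adim_union_singleton hx₀ (C.finOf (hR.trans C.hQQt))
    (C.apex_sub_notmem (fun x hx => C.hl x (hR hx)) ht hx₀)

lemma adim_hull_union_pair {R : Set V} (hR : R ⊆ C.Q) (hv : C.v ∈ R) :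
    adim (convexHull ℝ (R ∪ {C.u, C.w})) = adim R + 1 := by
  rw [adim_convexHull]
  exact adim_union_pair hv (C.finOf (hR.trans C.hQQt)) C.w_sub_v_mem
    (C.apex_sub_notmem (fun x hx => C.hl x (hR hx)) C.hlu hv)

end Ctx

end OPSProof

end OPSLift
section OPSLift2

open Set

namespace OPSProof

open scoped Classical

variable {V : Type*} [AddCommGroup V] [Module ℝ V]

namespace Ctx

variable (C : Ctx V)

lemma edge_lift {F F' : Set V} (h : (dualGraph C.Q).Adj F F') :
    (dualGraph C.Qt).Adj (C.lift F) (C.lift F') := by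
  obtain ⟨hFF'ne, hFfac, hF'fac, hridge⟩ := h
  have hQt := C.adimQt
  have hFne := C.face_nonempty_Q hFfac.1
  have hF'ne := C.face_nonempty_Q hF'fac.1
  obtain ⟨hGface, hGdim, g, M, hb, hchar, hGeq, hgu, hgwin, hgwout⟩ :=
    C.lift_spec hFfac.1 hFne
  obtain ⟨hG'face, hG'dim, g', M', hb', hchar', hG'eq, hgu', hgwin', hgwout'⟩ :=
    C.lift_spec hF'fac.1 hF'ne
  have hRface := hridge.1
  have hRne : (F ∩ F').Nonempty := C.face_nonempty_Q hRface
  have hRhull := C.face_hull_Q hRface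
  obtain ⟨hIface, hIeq⟩ := C.lift_inter hb hb' hchar hchar' hGeq hG'eq
    ⟨C.u, C.huQt, hgu, hgu'⟩ hRhull
  have hRQ : F ∩ F' ⊆ C.Q := fun x hx => (faceOf_subset hFfac.1) hx.1
  have hudist : C.u ∈ C.lift F ∩ C.lift F' := by
    constructor
    · rw [hGeq]; exact ⟨C.huQt, hgu⟩
    · rw [hG'eq]; exact ⟨C.huQt, hgu'⟩
  have hIdim : adim (C.lift F ∩ C.lift F') = adim (F ∩ F') + 1 := by
    by_cases hv : C.v ∈ F ∧ C.v ∈ F'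
    · have hA : ({C.u, C.w} : Set V) ∩ (C.lift F ∩ C.lift F') = {C.u, C.w} :=
        inter_eq_left.mpr (by
          rintro x (rfl | rfl)
          · exact hudist
          · constructor
            · rw [hGeq]; exact ⟨C.hwQt, hgwin hv.1⟩
            · rw [hG'eq]; exact ⟨C.hwQt, hgwin' hv.2⟩)
      rw [hIeq, hA]
      exact C.adim_hull_union_pair hRQ ⟨hv.1, hv.2⟩
    · have hwnot : C.w ∉ C.lift F ∩ C.lift F' := by
        intro hwmem
        apply hv
        constructor
        · by_contra hvF
          exact absurd ((hGeq ▸ hwmem.1).2) (ne_of_lt (hgwout hvF))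
        · by_contra hvF'
          exact absurd ((hG'eq ▸ hwmem.2).2) (ne_of_lt (hgwout' hvF'))
      have hA : ({C.u, C.w} : Set V) ∩ (C.lift F ∩ C.lift F') = {C.u} := by
        ext x
        constructor
        · rintro ⟨(rfl | rfl), hmem⟩
          · rfl
          · exact absurd hmem hwnot
        · rintro rfl
          exact ⟨Or.inl rfl, hudist⟩
      rw [hIeq, hA]
      exact C.adim_hull_union_single hRQ hRne C.hlu
  have hfacetG : IsFacetOf (C.lift F) C.Qt :=
    ⟨hGface, by have := hFfac.2; omega⟩
  have hfacetG' : IsFacetOf (C.lift F') C.Qt :=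
    ⟨hG'face, by have := hF'fac.2; omega⟩
  have hneq : C.lift F ≠ C.lift F' := by
    intro heq
    rw [heq, inter_self] at hIdim
    have h1 := hG'dim
    have h2 := hridge.2
    have h3 := hF'fac.2
    omega
  refine ⟨hneq, hfacetG, hfacetG', hIface, ?_⟩
  have h2 := hridge.2
  omega

lemma bridge_adj {F : Set V} (hF : IsFacetOf F C.Q) (hv : C.v ∉ F) :
    (dualGraph C.Qt).Adj (convexHull ℝ (F ∪ {C.u})) (convexHull ℝ (F ∪ {C.w})) := by
  have hQt := C.adimQt
  have hFne := C.face_nonempty_Q hF.1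
  obtain ⟨hGface, hGdim, g, M, hb, hchar, hGeq, hgu, hgwin, hgwout⟩ :=
    C.lift_spec hF.1 hFne
  have hlift : C.lift F = convexHull ℝ (F ∪ {C.u}) := if_neg hv
  have hF2 : IsFaceOf F C.swap.Q := hF.1
  obtain ⟨hG'face, hG'dim, g', M', hb', hchar', hG'eq, hgu', hgwin', hgwout'⟩ :=
    C.swap.lift_spec hF2 hFne
  simp only [swap_Qt, swap_Q, swap_u, swap_w, swap_v] at hG'face hG'dim hb' hchar' hG'eq hgu' hgwin' hgwout'
  have hlift' : C.swap.lift F = convexHull ℝ (F ∪ {C.w}) := if_neg hv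
  obtain ⟨x₀, hx₀⟩ := hFne
  have hx₀Q : x₀ ∈ C.Q := faceOf_subset hF.1 hx₀
  have hFFhull : F ∩ F = convexHull ℝ (C.S ∩ (F ∩ F)) := by
    rw [inter_self]
    exact C.face_hull_Q hF.1
  obtain ⟨hIface, hIeq⟩ := C.lift_inter hb hb' hchar hchar' hGeq hG'eq
    ⟨x₀, C.hQQt hx₀Q, (hchar x₀ hx₀Q).mpr hx₀, (hchar' x₀ hx₀Q).mpr hx₀⟩ hFFhull
  have hwG : C.w ∉ C.lift F := fun hc =>
    absurd ((hGeq ▸ hc).2) (ne_of_lt (hgwout hv))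
  have huG' : C.u ∉ C.swap.lift F := fun hc =>
    absurd ((hG'eq ▸ hc).2) (ne_of_lt (hgwout' hv))
  have hA : ({C.u, C.w} : Set V) ∩ (C.lift F ∩ C.swap.lift F) = ∅ := by
    apply eq_empty_iff_forall_notMem.mpr
    rintro x ⟨hx2, hm1, hm2⟩
    rcases hx2 with rfl | rfl
    · exact huG' hm2
    · exact hwG hm1
  rw [hA, union_empty, inter_self] at hIeq
  have hFconv : Convex ℝ F := faceOf_convex C.hQconv hF.1
  rw [hFconv.convexHull_eq] at hIeq
  have hne2 : C.lift F ≠ C.swap.lift F := by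
    intro heq
    apply huG'
    rw [← heq, hlift]
    exact subset_convexHull ℝ _ (Or.inr rfl)
  have hfacetG : IsFacetOf (C.lift F) C.Qt :=
    ⟨hGface, by have := hF.2; omega⟩
  have hfacetG' : IsFacetOf (C.swap.lift F) C.Qt :=
    ⟨hG'face, by have := hF.2; omega⟩
  have hridge : IsRidgeOf (C.lift F ∩ C.swap.lift F) C.Qt := by
    refine ⟨hIface, ?_⟩
    rw [hIeq]
    have := hF.2
    omega
  have hadj : (dualGraph C.Qt).Adj (C.lift F) (C.swap.lift F) :=
    ⟨hne2, hfacetG, hfacetG', hridge⟩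
  rwa [hlift, hlift'] at hadj

lemma lift_inter_Q {F : Set V} (hF : IsFaceOf F C.Q) (hne : F.Nonempty) :
    C.lift F ∩ C.Q = F := by
  obtain ⟨-, -, g, M, hb, hchar, hGeq, -, -, -⟩ := C.lift_spec hF hne
  rw [hGeq]
  ext x
  constructor
  · rintro ⟨⟨hxQt, hgx⟩, hxQ⟩
    exact (hchar x hxQ).mp hgx
  · intro hxF
    have hxQ := faceOf_subset hF hxF
    exact ⟨⟨C.hQQt hxQ, (hchar x hxQ).mpr hxF⟩, hxQ⟩

lemma reach_lift {F F' : Set V} (h : (dualGraph C.Q).Reachable F F') :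
    (dualGraph C.Qt).Reachable (C.lift F) (C.lift F') := by
  obtain ⟨W⟩ := h
  induction W with
  | nil => exact SimpleGraph.Reachable.refl _
  | cons hadj p ih => exact ((C.edge_lift hadj).reachable).trans ih

lemma endpoint {F Ft : Set V} (hF : IsFacetOf F C.Q)
    (ht : (C.v ∈ F ∧ Ft = convexHull ℝ (F ∪ {C.u, C.w})) ∨
      (C.v ∉ F ∧ (Ft = convexHull ℝ (F ∪ {C.u}) ∨ Ft = convexHull ℝ (F ∪ {C.w})))) :
    Ft ∩ C.Q = F ∧ (dualGraph C.Qt).Reachable Ft (C.lift F) := by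
  have hFne := C.face_nonempty_Q hF.1
  rcases ht with ⟨hv, rfl⟩ | ⟨hv, hcase⟩
  · have hlift : C.lift F = convexHull ℝ (F ∪ {C.u, C.w}) := if_pos hv
    rw [← hlift]
    exact ⟨C.lift_inter_Q hF.1 hFne, SimpleGraph.Reachable.refl _⟩
  · rcases hcase with rfl | rfl
    · have hlift : C.lift F = convexHull ℝ (F ∪ {C.u}) := if_neg hv
      rw [← hlift]
      exact ⟨C.lift_inter_Q hF.1 hFne, SimpleGraph.Reachable.refl _⟩
    · have hlift' : C.swap.lift F = convexHull ℝ (F ∪ {C.w}) := if_neg hv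
      constructor
      · rw [← hlift']
        exact C.swap.lift_inter_Q hF.1 hFne
      · have hlift : C.lift F = convexHull ℝ (F ∪ {C.u}) := if_neg hv
        have hadj := C.bridge_adj hF hv
        rw [hlift]
        exact hadj.symm.reachable

end Ctx

lemma dual_dist_zero_of_low {P : Set V} (h2 : adim P < 2) (F F' : Set V) :
    (dualGraph P).dist F F' = 0 := by
  rcases eq_or_ne F F' with rfl | hne
  · exact SimpleGraph.dist_self
  · apply SimpleGraph.dist_eq_zero_of_not_reachable
    intro hreach
    obtain ⟨W⟩ := hreach
    cases W with
    | nil => exact hne rfl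
    | cons hadj p =>
        have hd := hadj.2.2.2.2
        omega

end OPSProof

end OPSLift2
/-- For facets `F₁, F₂` of `Q`, let `Ft i` be the facet
`S_v(F i) = conv (F i ∪ {u,w})` of the one-point-suspension if `v ∈ F i`, or
either of the pyramids `F i * u = conv (F i ∪ {u})`, `F i * w` if `v ∉ F i`.
Then the dual distance between `Ft 1` and `Ft 2` in `Qt` is at least the dual
distance between `F₁` and `F₂` in `Q`. -/
theorem stmt8 {V : Type*} [AddCommGroup V] [Module ℝ V]
    (Q Qt : Set V) (v u w : V) (h : IsOPS Q Qt v u w)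
    (F₁ F₂ Ft₁ Ft₂ : Set V) (h1 : IsFacetOf F₁ Q) (h2 : IsFacetOf F₂ Q)
    (ht1 : (v ∈ F₁ ∧ Ft₁ = convexHull ℝ (F₁ ∪ {u, w})) ∨
      (v ∉ F₁ ∧ (Ft₁ = convexHull ℝ (F₁ ∪ {u}) ∨ Ft₁ = convexHull ℝ (F₁ ∪ {w}))))
    (ht2 : (v ∈ F₂ ∧ Ft₂ = convexHull ℝ (F₂ ∪ {u, w})) ∨
      (v ∉ F₂ ∧ (Ft₂ = convexHull ℝ (F₂ ∪ {u}) ∨ Ft₂ = convexHull ℝ (F₂ ∪ {w})))) :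
    dualDist Q F₁ F₂ ≤ dualDist Qt Ft₁ Ft₂ := by
  classical
  obtain ⟨hpoly, hvert, ⟨l, c, hl, hlu, hlw⟩, hseg, hQteq⟩ := h
  obtain ⟨S, hSfin, hQS⟩ := hpoly
  have hvQ : v ∈ Q := OPSProof.faceOf_subset hvert rfl
  set C : OPSProof.Ctx V :=
    { Q := Q, S := S, l := l, c := c, v := v, u := u, w := w,
      hS := hSfin, hQS := hQS, hl := hl, hvQ := hvQ,
      hlu := ne_of_lt hlu, hlw := ne_of_gt hlw, hseg := hseg } with hC
  have hQtC : Qt = C.Qt := by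
    rw [hQteq, ← C.Qt_eq_hullQ]
  subst hQtC
  unfold dualDist
  by_cases hdim : 2 ≤ adim Q
  · by_cases hreach : (dualGraph C.Qt).Reachable Ft₁ Ft₂
    · obtain ⟨W, hW⟩ := hreach.exists_walk_length_eq_dist
      obtain ⟨p, hp⟩ := C.walk_project hdim W
      have he1 : Ft₁ ∩ C.Q = F₁ := (C.endpoint h1 ht1).1
      have he2 : Ft₂ ∩ C.Q = F₂ := (C.endpoint h2 ht2).1
      have hle : (dualGraph Q).dist F₁ F₂ ≤ p.length := by
        have hd := SimpleGraph.dist_le (p.copy he1 he2)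
        rwa [SimpleGraph.Walk.length_copy] at hd
      exact hle.trans (hp.trans_eq hW)
    · rw [SimpleGraph.dist_eq_zero_of_not_reachable hreach, Nat.le_zero]
      rcases eq_or_ne F₁ F₂ with rfl | hne
      · exact SimpleGraph.dist_self
      · apply SimpleGraph.dist_eq_zero_of_not_reachable
        intro hreachQ
        apply hreach
        have hr1 := (C.endpoint h1 ht1).2
        have hr2 := (C.endpoint h2 ht2).2
        exact (hr1.trans (C.reach_lift hreachQ)).trans hr2.symm
  · rw [OPSProof.dual_dist_zero_of_low (by omega) F₁ F₂]
    exact Nat.zero_le _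
end
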